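/- Let G be a vertex-transitive and vertex-primitive group of automorphisms of a connectivity-one digraph Γ whose lobes all have at least three vertices, and let Λ be a lobe of Γ. Then the setwise stabiliser G_{Λ} acts primitively and not regularly on the vertices of Λ. -/

import Mathlib

open Pointwise

section DigraphBasics

variable {V : Type*}

/-- Adjacency in a digraph given by its arc relation. -/
def DigraphAdj (A : V → V → Prop) (u v : V) : Prop := A u v ∨ A v u

/-- The subdigraph induced on the set `S` is connected. -/
def ConnOn (A : V → V → Prop) (S : Set V) : Prop :=
  ∀ u ∈ S, ∀ v ∈ S,
    Relation.ReflTransGen (fun x y => DigraphAdj A x y ∧ x ∈ S ∧ y ∈ S) u v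

/-- A vertex whose removal disconnects the digraph. -/
def IsCutVertex (A : V → V → Prop) (v : V) : Prop := ¬ ConnOn A {v}ᶜ

/-- A digraph has connectivity one if it is connected and the removal of some
single vertex disconnects it. -/
def ConnectivityOne (A : V → V → Prop) : Prop :=
  ConnOn A Set.univ ∧ ∃ v : V, IsCutVertex A v

/-- The set `S` induces a subdigraph of connectivity strictly greater than one:
it is connected, has at least two vertices, and no single vertex disconnects it. -/
def TwoConnOn (A : V → V → Prop) (S : Set V) : Prop :=
  S.Nontrivial ∧ ConnOn A S ∧ ∀ w ∈ S, ConnOn A (S \ {w})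

/-- A lobe of a digraph: a maximal set of vertices inducing a connected subdigraph
of connectivity strictly greater than one. -/
def IsLobe (A : V → V → Prop) (Λ : Set V) : Prop :=
  TwoConnOn A Λ ∧ ∀ Λ' : Set V, TwoConnOn A Λ' → Λ ⊆ Λ' → Λ' = Λ

/-- `r` restricts to an equivalence relation on `S`. -/
def IsEquivRelOn (S : Set V) (r : V → V → Prop) : Prop :=
  (∀ u ∈ S, r u u) ∧ (∀ u ∈ S, ∀ v ∈ S, r u v → r v u) ∧
  (∀ u ∈ S, ∀ v ∈ S, ∀ w ∈ S, r u v → r v w → r u w)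

/-- The subgroup `H` acts transitively on the set `S`. -/
def TransitiveOn {G : Type*} [Group G] [MulAction G V] (H : Subgroup G) (S : Set V) : Prop :=
  ∀ u ∈ S, ∀ v ∈ S, ∃ h ∈ H, h • u = v

/-- The subgroup `H` acts primitively on the set `S`: transitively, and every
`H`-invariant equivalence relation on `S` is trivial or universal. -/
def PrimitiveOn {G : Type*} [Group G] [MulAction G V] (H : Subgroup G) (S : Set V) : Prop :=
  TransitiveOn H S ∧
  ∀ r : V → V → Prop, IsEquivRelOn S r →
    (∀ h ∈ H, ∀ u ∈ S, ∀ v ∈ S, r u v → r (h • u) (h • v)) →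
    (∀ u ∈ S, ∀ v ∈ S, r u v → u = v) ∨ (∀ u ∈ S, ∀ v ∈ S, r u v)

/-- The subgroup `H` acts regularly on the set `S`: transitively, with
point stabilisers acting trivially on `S`. -/
def RegularOn {G : Type*} [Group G] [MulAction G V] (H : Subgroup G) (S : Set V) : Prop :=
  TransitiveOn H S ∧ ∀ h ∈ H, ∀ v ∈ S, h • v = v → ∀ w ∈ S, h • w = w

end DigraphBasics


namespace LobeAux

open Relation

variable {V : Type*}

section Walks

variable {P Q : V → V → Prop}

/-- endpoint of a walk `x :: l`. -/
abbrev EndV (x : V) (l : List V) : V := l.getLastD x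

lemma endV_cons (x z : V) (l : List V) : EndV x (z :: l) = EndV z l := List.getLastD_cons ..

lemma endV_append (x : V) (l1 l2 : List V) :
    EndV x (l1 ++ l2) = EndV (EndV x l1) l2 := by
  induction l1 generalizing x with
  | nil => rfl
  | cons z l ih => rw [List.cons_append, endV_cons, endV_cons, ih]

lemma rtg_of_chain {x : V} {l : List V} (h : List.Chain P x l) :
    ReflTransGen P x (EndV x l) := by
  induction l generalizing x with
  | nil => exact .refl
  | cons z l ih =>
    cases h with
    | cons_cons hr hc => rw [endV_cons]; exact .head hr (ih hc)

lemma chain_snoc {x z : V} {l : List V} (h : List.Chain P x l) (hz : P (EndV x l) z) :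
    List.Chain P x (l ++ [z]) := by
  induction l generalizing x with
  | nil => exact List.Chain.cons hz .nil
  | cons w l ih =>
    cases h with
    | cons_cons hr hc => exact List.Chain.cons hr (ih hc (by rwa [endV_cons] at hz))

lemma chain_of_rtg {x y : V} (h : ReflTransGen P x y) :
    ∃ l, List.Chain P x l ∧ EndV x l = y := by
  induction h with
  | refl => exact ⟨[], .nil, rfl⟩
  | tail hab hr ih =>
    obtain ⟨l, hc, he⟩ := ih
    refine ⟨l ++ [_], chain_snoc hc (he ▸ hr), ?_⟩
    rw [endV_append]; rfl

lemma chain_mem_pred {x : V} {l : List V} (h : List.Chain P x l) :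
    ∀ z ∈ l, ∃ a, P a z := by
  induction l generalizing x with
  | nil => intro z hz; cases hz
  | cons w l ih =>
    cases h with
    | cons_cons hr hc =>
      intro z hz
      rcases List.mem_cons.1 hz with rfl | hz
      · exact ⟨x, hr⟩
      · exact ih hc z hz

lemma chain_dedup : ∀ (n : ℕ) {l : List V} {x : V}, l.length ≤ n → List.Chain P x l →
    ∃ l', List.Chain P x l' ∧ EndV x l' = EndV x l ∧ (x :: l').Nodup ∧ (x :: l') ⊆ (x :: l) := by
  intro n
  induction n with
  | zero =>
    intro l x hl _
    have : l = [] := List.length_eq_zero_iff.1 (Nat.le_zero.1 hl)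
    subst this
    exact ⟨[], .nil, rfl, List.nodup_singleton x, fun a ha => ha⟩
  | succ n ih =>
    intro l x hl hc
    by_cases hx : x ∈ l
    · obtain ⟨s, t, rfl⟩ := List.append_of_mem hx
      have h2 : List.Chain P x t := ((List.isChain_split (l₁ := x :: s)).1 hc).2
      have hlen : t.length ≤ n := by
        have := hl; simp [List.length_append] at this; omega
      obtain ⟨l', hc', he', hn', hs'⟩ := ih hlen h2
      refine ⟨l', hc', ?_, hn', ?_⟩
      · rw [he', endV_append, endV_cons]
      · intro a ha
        rcases List.mem_cons.1 (hs' ha) with rfl | h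
        · exact List.mem_cons_self
        · exact List.mem_cons_of_mem _ (by simp [h])
    · cases l with
      | nil => exact ⟨[], .nil, rfl, List.nodup_singleton x, fun a ha => ha⟩
      | cons z l0 =>
        cases hc with
        | cons_cons hr hc0 =>
          have hlen : l0.length ≤ n := by simpa using hl
          obtain ⟨l', hc', he', hn', hs'⟩ := ih hlen hc0
          refine ⟨z :: l', List.Chain.cons hr hc', ?_, ?_, ?_⟩
          · rw [endV_cons, he', endV_cons]
          · refine List.nodup_cons.2 ⟨fun hmem => hx ?_, hn'⟩
            exact hs' hmem
          · intro a ha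
            rcases List.mem_cons.1 ha with rfl | h
            · exact List.mem_cons_self
            · exact List.mem_cons_of_mem _ (hs' h)

lemma rtg_cross {r : V → V → Prop} {R : Set V} {a b : V}
    (h : ReflTransGen r a b) (ha : a ∈ R) (hb : b ∉ R) :
    ∃ y z, r y z ∧ y ∈ R ∧ z ∉ R := by
  induction h with
  | refl => exact absurd ha hb
  | @tail b c hab hbc ih =>
    by_cases hmem : b ∈ R
    · exact ⟨b, c, hbc, hmem, hb⟩
    · exact ih hmem


lemma chain_concat {x : V} {l1 l2 : List V} (h1 : List.Chain P x l1)
    (h2 : List.Chain P (EndV x l1) l2) : List.Chain P x (l1 ++ l2) := by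
  induction l1 generalizing x with
  | nil => exact h2
  | cons z l ih =>
    cases h1 with
    | cons_cons hr hc => exact List.Chain.cons hr (ih hc (by rwa [endV_cons] at h2))

end Walks

/-- step relation within a set -/
def Stp (A : V → V → Prop) (S : Set V) : V → V → Prop :=
  fun a b => DigraphAdj A a b ∧ a ∈ S ∧ b ∈ S

lemma connOn_iff (A : V → V → Prop) (S : Set V) :
    ConnOn A S ↔ ∀ u ∈ S, ∀ v ∈ S, ReflTransGen (Stp A S) u v := Iff.rfl

lemma adj_symm {A : V → V → Prop} {a b : V} (h : DigraphAdj A a b) : DigraphAdj A b a := h.symm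

lemma stp_symm {A : V → V → Prop} {S : Set V} : Symmetric (Stp A S) :=
  fun _ _ h => ⟨h.1.symm, h.2.2, h.2.1⟩

lemma rtg_stp_symm {A : V → V → Prop} {S : Set V} {a b : V}
    (h : ReflTransGen (Stp A S) a b) : ReflTransGen (Stp A S) b a :=
  (@ReflTransGen.symmetric _ _ ⟨fun _ _ h => stp_symm h⟩).symm _ _ h

lemma rtg_stp_mono {A : V → V → Prop} {S T : Set V} (hST : S ⊆ T) {a b : V}
    (h : ReflTransGen (Stp A S) a b) : ReflTransGen (Stp A T) a b :=
  ReflTransGen.mono (fun _ _ hp => ⟨hp.1, hST hp.2.1, hST hp.2.2⟩) _ _ h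

lemma connOn_diff_of_twoConn {A : V → V → Prop} {S : Set V} (h : TwoConnOn A S) (w : V) :
    ConnOn A (S \ {w}) := by
  by_cases hw : w ∈ S
  · exact h.2.2 w hw
  · rw [Set.diff_singleton_eq_self hw]; exact h.2.1

lemma rtg_stp_of_chain_mem {A : V → V → Prop} {S : Set V} :
    ∀ {x : V} {l : List V}, x ∈ S → (∀ z ∈ l, z ∈ S) → List.Chain (DigraphAdj A) x l →
    ∀ z ∈ x :: l, ReflTransGen (Stp A S) x z := by
  intro x l
  induction l generalizing x with
  | nil =>
    intro hx _ _ z hz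
    rcases List.mem_singleton.1 hz with rfl
    exact .refl
  | cons w l ih =>
    intro hx hl hc z hz
    cases hc with
    | cons_cons hr hc0 =>
      have hw : w ∈ S := hl w (List.mem_cons_self)
      rcases List.mem_cons.1 hz with rfl | hz
      · exact .refl
      · exact .head ⟨hr, hx, hw⟩ (ih hw (fun a ha => hl a (List.mem_cons_of_mem _ ha)) hc0 z hz)

section Smul
variable {G : Type*} [Group G] [MulAction G V] {A : V → V → Prop}
variable (hA : ∀ (g : G) (u v : V), A u v ↔ A (g • u) (g • v))
include hA

lemma adj_smul (g : G) {u v : V} (h : DigraphAdj A u v) : DigraphAdj A (g • u) (g • v) := by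
  rcases h with h | h
  · exact Or.inl ((hA g u v).1 h)
  · exact Or.inr ((hA g v u).1 h)

lemma connOn_smul (g : G) {S : Set V} (h : ConnOn A S) : ConnOn A (g • S) := by
  intro u hu v hv
  obtain ⟨u0, hu0, rfl⟩ := hu
  obtain ⟨v0, hv0, rfl⟩ := hv
  refine ReflTransGen.lift (fun z => g • z) (fun a b hp => ?_) _ _ (h u0 hu0 v0 hv0)
  exact ⟨adj_smul hA g hp.1, Set.smul_mem_smul_set hp.2.1, Set.smul_mem_smul_set hp.2.2⟩

lemma twoConnOn_smul (g : G) {S : Set V} (h : TwoConnOn A S) : TwoConnOn A (g • S) := by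
  obtain ⟨⟨x, hx, y, hy, hxy⟩, hconn, hdel⟩ := h
  refine ⟨⟨g • x, Set.smul_mem_smul_set hx, g • y, Set.smul_mem_smul_set hy,
    fun hc => hxy (smul_left_cancel g hc)⟩, connOn_smul hA g hconn, ?_⟩
  intro w hw
  obtain ⟨w0, hw0, rfl⟩ := hw
  have : (g • S) \ {g • w0} = g • (S \ {w0}) := by
    rw [Set.smul_set_sdiff, Set.smul_set_singleton]
  rw [this]
  exact connOn_smul hA g (hdel w0 hw0)

lemma isLobe_smul (g : G) {L : Set V} (h : IsLobe A L) : IsLobe A (g • L) := by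
  refine ⟨twoConnOn_smul hA g h.1, ?_⟩
  intro L' hL' hsub
  have h1 : L ⊆ g⁻¹ • L' := by
    intro x hx
    rw [Set.mem_inv_smul_set_iff]
    exact hsub (Set.smul_mem_smul_set hx)
  have h2 := h.2 (g⁻¹ • L') (twoConnOn_smul hA g⁻¹ hL') h1
  calc L' = g • (g⁻¹ • L') := by rw [smul_inv_smul]
  _ = g • L := by rw [h2]

end Smul

section Lobes
variable {A : V → V → Prop}

lemma twoConn_pair {x y : V} (hxy : x ≠ y) (hadj : DigraphAdj A x y) :
    TwoConnOn A {x, y} := by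
  have hx : x ∈ ({x, y} : Set V) := by simp
  have hy : y ∈ ({x, y} : Set V) := by simp
  refine ⟨⟨x, hx, y, hy, hxy⟩, ?_, ?_⟩
  · intro u hu v hv
    rcases hu with rfl | hu
    · rcases hv with rfl | hv
      · exact .refl
      · rcases hv with rfl; exact .single ⟨hadj, hx, hy⟩
    · rcases hu with rfl
      rcases hv with rfl | hv
      · exact .single ⟨hadj.symm, hy, hx⟩
      · rcases hv with rfl; exact .refl
  · intro w hw u hu v hv
    have : u = v := by
      rcases hu with ⟨hu1, hu2⟩
      rcases hv with ⟨hv1, hv2⟩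
      rcases hw with rfl | hw
      · rcases hu1 with rfl | hu1
        · exact absurd rfl hu2
        · rcases hv1 with rfl | hv1
          · exact absurd rfl hv2
          · rcases hu1 with rfl; rcases hv1 with rfl; rfl
      · rcases hw with rfl
        rcases hu1 with rfl | hu1
        · rcases hv1 with rfl | hv1
          · rfl
          · rcases hv1 with rfl; exact absurd rfl hv2
        · rcases hu1 with rfl; exact absurd rfl hu2
    subst this; exact .refl

lemma exists_lobe_of_twoConn {S : Set V} (hS : TwoConnOn A S) :
    ∃ L, IsLobe A L ∧ S ⊆ L := by
  set F : Set (Set V) := {T | TwoConnOn A T ∧ S ⊆ T} with hF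
  have hz : ∀ c ⊆ F, IsChain (· ⊆ ·) c → c.Nonempty → ∃ ub ∈ F, ∀ s ∈ c, s ⊆ ub := by
    intro c hc hchain ⟨t0, ht0⟩
    have hmax2 : ∀ t1 ∈ c, ∀ t2 ∈ c, ∃ t ∈ c, t1 ⊆ t ∧ t2 ⊆ t := by
      intro t1 h1 t2 h2
      rcases hchain.total h1 h2 with h | h
      · exact ⟨t2, h2, h, subset_rfl⟩
      · exact ⟨t1, h1, subset_rfl, h⟩
    refine ⟨⋃₀ c, ⟨⟨?_, ?_, ?_⟩, ?_⟩, fun s hs => Set.subset_sUnion_of_mem hs⟩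
    · exact hS.1.mono ((hc ht0).2.trans (Set.subset_sUnion_of_mem ht0))
    · intro u hu v hv
      obtain ⟨t1, ht1, hu1⟩ := hu
      obtain ⟨t2, ht2, hv2⟩ := hv
      obtain ⟨t, ht, hs1, hs2⟩ := hmax2 t1 ht1 t2 ht2
      exact rtg_stp_mono (Set.subset_sUnion_of_mem ht) ((hc ht).1.2.1 u (hs1 hu1) v (hs2 hv2))
    · intro w hw u hu v hv
      obtain ⟨t3, ht3, hw3⟩ := hw
      obtain ⟨t1, ht1, hu1⟩ := hu.1
      obtain ⟨t2, ht2, hv2⟩ := hv.1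
      obtain ⟨t4, ht4, hs1, hs2⟩ := hmax2 t1 ht1 t2 ht2
      obtain ⟨t, ht, hs4, hs3⟩ := hmax2 t4 ht4 t3 ht3
      have hconn := connOn_diff_of_twoConn (hc ht).1 w
      have := hconn u ⟨hs4 (hs1 hu1), hu.2⟩ v ⟨hs4 (hs2 hv2), hv.2⟩
      refine rtg_stp_mono ?_ this
      intro a ha
      exact ⟨Set.subset_sUnion_of_mem ht ha.1, ha.2⟩
    · exact ((hc ht0).2).trans (Set.subset_sUnion_of_mem ht0)
  obtain ⟨m, hsm, hm⟩ := zorn_subset_nonempty F hz S ⟨hS, subset_rfl⟩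
  refine ⟨m, ⟨hm.prop.1, ?_⟩, hsm⟩
  intro L' hL' hsub
  exact le_antisymm (hm.le_of_ge ⟨hL', hsm.trans hsub⟩ hsub) hsub

lemma lobe_inter_subsingleton {L1 L2 : Set V} (h1 : IsLobe A L1) (h2 : IsLobe A L2)
    (hne : L1 ≠ L2) {a b : V} (ha : a ∈ L1 ∩ L2) (hb : b ∈ L1 ∩ L2) : a = b := by
  by_contra hab
  have hconn : ∀ {u : V}, u ∈ L1 ∪ L2 → ∀ {cc : V}, cc ∈ L1 ∩ L2 →
      ReflTransGen (Stp A (L1 ∪ L2)) u cc := by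
    intro u hu cc hcc
    rcases hu with hu | hu
    · exact rtg_stp_mono Set.subset_union_left (h1.1.2.1 u hu cc hcc.1)
    · exact rtg_stp_mono Set.subset_union_right (h2.1.2.1 u hu cc hcc.2)
  have hT : TwoConnOn A (L1 ∪ L2) := by
    refine ⟨h1.1.1.mono Set.subset_union_left, ?_, ?_⟩
    · intro u hu v hv
      exact (hconn hu ha).trans (rtg_stp_symm (hconn hv ha))
    · intro w hw u hu v hv
      obtain ⟨cc, hccm, hccw⟩ : ∃ cc, cc ∈ L1 ∩ L2 ∧ cc ≠ w := by
        by_cases hwa : w = a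
        · exact ⟨b, hb, fun h => hab ((h.trans hwa).symm)⟩
        · exact ⟨a, ha, fun h => hwa h.symm⟩
      have key : ∀ {u : V}, u ∈ (L1 ∪ L2) \ {w} →
          ReflTransGen (Stp A ((L1 ∪ L2) \ {w})) u cc := by
        intro u hu
        rcases hu.1 with hmem | hmem
        · refine rtg_stp_mono ?_ (connOn_diff_of_twoConn h1.1 w u ⟨hmem, hu.2⟩ cc ⟨hccm.1, hccw⟩)
          intro z hz; exact ⟨Or.inl hz.1, hz.2⟩
        · refine rtg_stp_mono ?_ (connOn_diff_of_twoConn h2.1 w u ⟨hmem, hu.2⟩ cc ⟨hccm.2, hccw⟩)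
          intro z hz; exact ⟨Or.inr hz.1, hz.2⟩
      exact (key hu).trans (rtg_stp_symm (key hv))
  have e1 := h1.2 _ hT Set.subset_union_left
  have e2 := h2.2 _ hT Set.subset_union_right
  exact hne (e1.symm.trans e2)

end Lobes

section Cut
variable {G : Type*} [Group G] [MulAction G V] {A : V → V → Prop}

lemma cut_smul (hA : ∀ (g : G) (u v : V), A u v ↔ A (g • u) (g • v)) (g : G) {v : V}
    (h : IsCutVertex A v) : IsCutVertex A (g • v) := by
  intro hconn
  apply h
  have := connOn_smul hA g⁻¹ hconn
  have heq : g⁻¹ • ({g • v}ᶜ : Set V) = {v}ᶜ := by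
    rw [Set.smul_set_compl, Set.smul_set_singleton, inv_smul_smul]
  rwa [heq] at this

lemma every_vertex_cut (hA : ∀ (g : G) (u v : V), A u v ↔ A (g • u) (g • v))
    (hvtrans : ∀ u ∈ (Set.univ : Set V), ∀ v ∈ (Set.univ : Set V), ∃ h ∈ (⊤ : Subgroup G), h • u = v)
    {v0 : V} (h0 : IsCutVertex A v0) (v : V) : IsCutVertex A v := by
  obtain ⟨g, -, hg⟩ := hvtrans v0 trivial v trivial
  exact hg ▸ cut_smul hA g h0

/-- every cut vertex lies in two distinct lobes -/
lemma two_lobes_of_cut (hconn : ConnOn A Set.univ) {v : V} (hcut : IsCutVertex A v) :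
    ∃ L1 L2, IsLobe A L1 ∧ IsLobe A L2 ∧ v ∈ L1 ∧ v ∈ L2 ∧ L1 ≠ L2 := by
  rw [IsCutVertex, ConnOn] at hcut
  push_neg at hcut
  obtain ⟨a, ha, b, hb, hab⟩ := hcut
  set R : Set V := {z | z ≠ v ∧ ReflTransGen (Stp A {v}ᶜ) a z} with hR
  set R' : Set V := {z | z ≠ v ∧ ReflTransGen (Stp A {v}ᶜ) b z} with hR'
  have haR : a ∈ R := ⟨ha, .refl⟩
  have hbR' : b ∈ R' := ⟨hb, .refl⟩
  have hdisj : ∀ t, t ∈ R → t ∉ R' := by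
    rintro t ⟨-, h1⟩ ⟨-, h2⟩
    exact hab (h1.trans (rtg_stp_symm h2))
  have hbR : b ∉ R := fun h => hdisj b h hbR'
  have haR' : a ∉ R' := fun h => hdisj a ⟨ha, .refl⟩ h
  have hcross : ∀ (c : V) (S : Set V), c ∈ S →
      (∀ y z, DigraphAdj A y z → y ∈ S → z ≠ v → z ∈ S) →
      (∀ t ∈ S, t ≠ v) → ∀ (d : V), d ∉ S → ∃ y, y ∈ S ∧ DigraphAdj A y v := by
    intro c S hc hstep hnv d hd
    obtain ⟨y, z, hyz, hyS, hzS⟩ := rtg_cross (hconn c trivial d trivial) hc hd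
    by_cases hzv : z = v
    · exact ⟨y, hyS, hzv ▸ hyz.1⟩
    · exact absurd (hstep y z hyz.1 hyS hzv) hzS
  have hRstep : ∀ y z, DigraphAdj A y z → y ∈ R → z ≠ v → z ∈ R := by
    rintro y z hyz ⟨hyv, hy⟩ hzv
    exact ⟨hzv, hy.tail ⟨hyz, hyv, hzv⟩⟩
  have hR'step : ∀ y z, DigraphAdj A y z → y ∈ R' → z ≠ v → z ∈ R' := by
    rintro y z hyz ⟨hyv, hy⟩ hzv
    exact ⟨hzv, hy.tail ⟨hyz, hyv, hzv⟩⟩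
  obtain ⟨y, hyR, hyadj⟩ := hcross a R haR hRstep (fun t ht => ht.1) b hbR
  obtain ⟨y', hyR', hyadj'⟩ := hcross b R' hbR' hR'step (fun t ht => ht.1) a haR'
  obtain ⟨L1, hL1, hsub1⟩ := exists_lobe_of_twoConn (twoConn_pair hyR.1 hyadj)
  obtain ⟨L2, hL2, hsub2⟩ := exists_lobe_of_twoConn (twoConn_pair hyR'.1 hyadj')
  refine ⟨L1, L2, hL1, hL2, hsub1 (by simp), hsub2 (by simp), ?_⟩
  rintro rfl
  have hyL : y ∈ L1 := hsub1 (by simp)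
  have hy'L : y' ∈ L1 := hsub2 (by simp)
  have := connOn_diff_of_twoConn hL1.1 v y ⟨hyL, hyR.1⟩ y' ⟨hy'L, hyR'.1⟩
  have hrtg : ReflTransGen (Stp A {v}ᶜ) y y' := by
    refine rtg_stp_mono ?_ this
    intro t ht; exact ht.2
  exact hdisj y' ⟨hyR'.1, hyR.2.trans hrtg⟩ hyR'

end Cut

section Gate
variable {A : V → V → Prop} {Λ : Set V}

/-- reachability avoiding `Λ` except at the final gate `w` -/
def PReach (A : V → V → Prop) (Λ : Set V) (x w : V) : Prop :=
  ReflTransGen (fun a b => DigraphAdj A a b ∧ a ∉ Λ \ {w} ∧ b ∉ Λ \ {w}) x w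

lemma chain_append' {P : V → V → Prop} {x : V} {l1 l2 : List V} (h : List.Chain P x (l1 ++ l2)) :
    List.Chain P x l1 ∧ List.Chain P (EndV x l1) l2 := by
  induction l1 generalizing x with
  | nil => exact ⟨.nil, h⟩
  | cons z l ih =>
    cases h with
    | cons_cons hr hc =>
      obtain ⟨h1, h2⟩ := ih hc
      exact ⟨.cons hr h1, by rwa [endV_cons]⟩

lemma endV_mem (x : V) (l : List V) : EndV x l ∈ x :: l := by
  induction l generalizing x with
  | nil => exact List.mem_singleton.2 rfl
  | cons z l ih =>
    rw [endV_cons]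
    exact List.mem_cons_of_mem _ (ih z)

lemma nodup_mid {s t : List V} {z : V} (h : (s ++ z :: t).Nodup) : z ∉ s ∧ z ∉ t := by
  rw [List.nodup_append] at h
  exact ⟨fun hs => h.2.2 z hs z List.mem_cons_self rfl, (List.nodup_cons.1 h.2.1).1⟩

lemma walk_conn {T : Set V} {a : V} {m : List V} (ha : a ∈ T) (hm : ∀ y ∈ m, y ∈ T)
    (hc : List.Chain (DigraphAdj A) a m) :
    ∀ u ∈ a :: m, ∀ v ∈ a :: m, ReflTransGen (Stp A T) u v := by
  intro u hu v hv
  exact (rtg_stp_symm (rtg_stp_of_chain_mem ha hm hc u hu)).trans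
    (rtg_stp_of_chain_mem ha hm hc v hv)

lemma preach_eq_of_mem {x w : V} (hx : x ∈ Λ) (h : PReach A Λ x w) : x = w := by
  rcases h.cases_head with h | ⟨c, hstep, -⟩
  · exact h
  · by_contra hxw
    exact hstep.2.1 ⟨hx, hxw⟩

lemma gate_unique (hΛ : IsLobe A Λ) {x w w' : V} (hw : w ∈ Λ) (hw' : w' ∈ Λ) (hx : x ∉ Λ)
    (h1 : PReach A Λ x w) (h2 : PReach A Λ x w') : w = w' := by
  by_contra hne
  set P : V → V → Prop := fun a b => DigraphAdj A a b ∧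
    ((a ∉ Λ \ {w} ∧ b ∉ Λ \ {w}) ∨ (a ∉ Λ \ {w'} ∧ b ∉ Λ \ {w'})) with hP
  have hsym1 : Symmetric (fun a b => DigraphAdj A a b ∧ a ∉ Λ \ {w} ∧ b ∉ Λ \ {w}) :=
    fun _ _ h => ⟨h.1.symm, h.2.2, h.2.1⟩
  have hrw : ReflTransGen P w w' := by
    have ha : ReflTransGen P w x := by
      refine ReflTransGen.mono ?_ _ _ ((@ReflTransGen.symmetric _ _ ⟨fun _ _ h => hsym1 h⟩).symm _ _ h1)
      exact fun a b hp => ⟨hp.1, Or.inl hp.2⟩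
    have hb : ReflTransGen P x w' := ReflTransGen.mono (fun a b hp => ⟨hp.1, Or.inr hp.2⟩) _ _ h2
    exact ha.trans hb
  obtain ⟨l0, hc0, he0⟩ := chain_of_rtg hrw
  obtain ⟨l, hc, he, hnd, -⟩ := chain_dedup l0.length le_rfl hc0
  rw [he0] at he
  have hlne : l ≠ [] := by rintro rfl; exact hne he
  set I : List V := l.dropLast with hI
  have hsplit : l = I ++ [w'] := by
    conv_lhs => rw [← List.dropLast_append_getLast hlne]
    rw [hI]
    congr 1
    rw [← he]
    cases l with
    | nil => exact absurd rfl hlne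
    | cons a as => simp [EndV, List.getLastD_eq_getLast?, List.getLast?_eq_getLast]
  have hwl : w ∉ l := (List.nodup_cons.1 hnd).1
  have hndl : l.Nodup := (List.nodup_cons.1 hnd).2
  have hw'I : w' ∉ I := (nodup_mid (s := I) (t := []) (by rwa [hsplit] at hndl)).1
  have hlS : ∀ z ∈ l, z ∈ Λ → z = w' := by
    intro z hz hzΛ
    have hzw : z ≠ w := fun h => hwl (h ▸ hz)
    by_contra hzw'
    obtain ⟨a, hp⟩ := chain_mem_pred hc z hz
    rcases hp.2 with ⟨-, h⟩ | ⟨-, h⟩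
    · exact h ⟨hzΛ, hzw⟩
    · exact h ⟨hzΛ, hzw'⟩
  have hInotΛ : ∀ z ∈ I, z ∉ Λ := by
    intro z hz hzΛ
    exact hw'I ((hlS z (hsplit ▸ List.mem_append_left _ hz) hzΛ) ▸ hz)
  have hIne : I ≠ [] := by
    rintro hInil
    rw [hInil] at hsplit
    rw [hsplit] at hc
    cases hc with
    | cons_cons hr _ =>
      rcases hr.2 with ⟨-, h⟩ | ⟨h, -⟩
      · exact h ⟨hw', fun hh => hne hh.symm⟩
      · exact h ⟨hw, hne⟩
  set S : Set V := Λ ∪ {z | z ∈ I} with hS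
  have hΛS : Λ ⊆ S := Set.subset_union_left
  have hadjchain : List.Chain (DigraphAdj A) w l := List.Chain.imp (fun a b hp => hp.1) hc
  have hlmemS : ∀ z ∈ l, z ∈ S := by
    intro z hz
    rcases List.mem_append.1 (hsplit ▸ hz) with h | h
    · exact Or.inr h
    · rw [List.mem_singleton.1 h]; exact hΛS hw'
  have hwS : w ∈ S := hΛS hw
  have hTwoConn : TwoConnOn A S := by
    refine ⟨hΛ.1.1.mono hΛS, ?_, ?_⟩
    · intro u hu v hv
      have hanchor : ∀ u ∈ S, ReflTransGen (Stp A S) u w := by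
        intro u hu
        rcases hu with hu | hu
        · exact rtg_stp_mono hΛS (hΛ.1.2.1 u hu w hw)
        · exact rtg_stp_symm (rtg_stp_of_chain_mem hwS hlmemS hadjchain u
            (List.mem_cons_of_mem _ (hsplit ▸ List.mem_append_left _ hu)))
      exact (hanchor u hu).trans (rtg_stp_symm (hanchor v hv))
    · intro z hzS u hu v hv
      -- anchor and connection argument, by cases on z
      suffices hkey : ∃ α ∈ S \ {z}, ∀ u ∈ S \ {z}, ReflTransGen (Stp A (S \ {z})) u α by
        obtain ⟨α, -, hα⟩ := hkey
        exact (hα u hu).trans (rtg_stp_symm (hα v hv))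
      have hΛdel : ∀ (β : V), β ∈ Λ → β ≠ z → ∀ u ∈ Λ \ {z}, ReflTransGen (Stp A (S \ {z})) u β := by
        intro β hβ hβz u hu
        refine rtg_stp_mono ?_ (connOn_diff_of_twoConn hΛ.1 z u hu β ⟨hβ, hβz⟩)
        intro a ha
        exact ⟨hΛS ha.1, ha.2⟩
      by_cases hzI : z ∈ I
      · -- z internal
        have hzΛ : z ∉ Λ := hInotΛ z hzI
        have hzw : z ≠ w := fun h => hzΛ (h ▸ hw)
        have hzw' : z ≠ w' := fun h => hzΛ (h ▸ hw')
        obtain ⟨s, t, hst⟩ := List.append_of_mem (hsplit ▸ List.mem_append_left _ hzI : z ∈ l)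
        have hndst := hst ▸ hndl
        have hznst := nodup_mid hndst
        have hsmem : ∀ y ∈ s, y ∈ S \ {z} := fun y hy =>
          ⟨hlmemS y (hst ▸ List.mem_append_left _ hy), fun h => hznst.1 (h ▸ hy)⟩
        have htmem : ∀ y ∈ t, y ∈ S \ {z} := fun y hy =>
          ⟨hlmemS y (hst ▸ List.mem_append_right _ (List.mem_cons_of_mem _ hy)),
           fun h => hznst.2 (h ▸ hy)⟩
        have hwz : w ∈ S \ {z} := ⟨hwS, fun h => hzw (by simpa using h.symm)⟩
        have hchains : List.Chain (DigraphAdj A) w s := (chain_append' (hst ▸ hadjchain)).1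
        have htne : t ≠ [] := by
          rintro rfl
          apply hzw'
          rw [← he, hst, endV_append, endV_cons]
          rfl
        obtain ⟨u0, t2, rfl⟩ := List.exists_cons_of_ne_nil htne
        have hchaint : List.Chain (DigraphAdj A) u0 t2 := by
          have h2 := (chain_append' (hst ▸ hadjchain)).2
          cases h2 with
          | cons_cons _ h3 =>
            cases h3 with
            | cons_cons _ h4 => exact h4
        have hw'end : EndV u0 t2 = w' := by
          rw [← he, hst, endV_append, endV_cons, endV_cons]
        have hu0mem : u0 ∈ S \ {z} := htmem u0 (List.mem_cons_self)
        have ht2mem : ∀ y ∈ t2, y ∈ S \ {z} := fun y hy => htmem y (List.mem_cons_of_mem _ hy)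
        refine ⟨w, hwz, ?_⟩
        intro u hu
        rcases hu.1 with huΛ | huI
        · exact hΛdel w hw (fun h => hzw h.symm) u ⟨huΛ, hu.2⟩
        · have hul : (u : V) ∈ l := hsplit ▸ List.mem_append_left _ huI
          rcases List.mem_append.1 (hst ▸ hul) with hus | hut
          · exact walk_conn (T := S \ {z}) hwz hsmem hchains u
              (List.mem_cons_of_mem _ hus) w (List.mem_cons_self)
          · rcases List.mem_cons.1 hut with h | hut2
            · exact absurd h hu.2
            · have h1 : ReflTransGen (Stp A (S \ {z})) u w' := by
                refine walk_conn hu0mem ht2mem hchaint u hut2 w' ?_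
                rw [← hw'end]; exact endV_mem u0 t2
              exact h1.trans (hΛdel w hw (fun h => hzw h.symm) w' ⟨hw', fun h => hzw' (by simpa using h.symm)⟩)
      · -- z ∈ Λ
        have hzΛ : z ∈ Λ := by
          rcases hzS with h | h
          · exact h
          · exact absurd h hzI
        by_cases hzw : z = w
        · -- removed w; anchor w'
          subst hzw
          have hw'z : w' ∈ S \ {z} := ⟨hΛS hw', fun h => hne (by simpa using h.symm)⟩
          obtain ⟨u0, t2, rfl⟩ := List.exists_cons_of_ne_nil hlne
          have hchaint : List.Chain (DigraphAdj A) u0 t2 := by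
            cases hadjchain with | cons_cons _ h => exact h
          have hmemt : u0 ∈ S \ {z} ∧ ∀ y ∈ t2, y ∈ S \ {z} := by
            constructor
            · exact ⟨hlmemS u0 (List.mem_cons_self), fun h => hwl (h ▸ List.mem_cons_self)⟩
            · intro y hy
              exact ⟨hlmemS y (List.mem_cons_of_mem _ hy),
                fun h => hwl (h ▸ List.mem_cons_of_mem _ hy)⟩
          have hw'endl : EndV u0 t2 = w' := by rw [← he, endV_cons]
          refine ⟨w', hw'z, ?_⟩
          intro u hu
          rcases hu.1 with huΛ | huI
          · exact hΛdel w' hw' (fun h => hne h.symm) u ⟨huΛ, hu.2⟩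
          · refine walk_conn hmemt.1 hmemt.2 hchaint u ?_ w' ?_
            · rcases List.mem_cons.1 (hsplit ▸ List.mem_append_left _ huI : u ∈ u0 :: t2) with h | h
              · exact h ▸ List.mem_cons_self
              · exact List.mem_cons_of_mem _ h
            · rw [← hw'endl]; exact endV_mem u0 t2
        · by_cases hzw' : z = w'
          · -- removed w'; anchor w, use prefix walk w :: I
            subst hzw'
            have hchainI : List.Chain (DigraphAdj A) w I := (chain_append' (hsplit ▸ hadjchain)).1
            have hwz : w ∈ S \ {z} := ⟨hwS, fun h => hne h⟩
            have hImem : ∀ y ∈ I, y ∈ S \ {z} := fun y hy =>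
              ⟨Or.inr hy, fun h => hw'I (h ▸ hy)⟩
            refine ⟨w, hwz, ?_⟩
            intro u hu
            rcases hu.1 with huΛ | huI
            · exact hΛdel w hw (fun h => hne h) u ⟨huΛ, hu.2⟩
            · exact walk_conn hwz hImem hchainI u (List.mem_cons_of_mem _ huI) w
                (List.mem_cons_self)
          · -- z ∈ Λ, z ∉ {w, w'}: whole walk avoids z
            have hwz : w ∈ S \ {z} := ⟨hwS, fun h => hzw h.symm⟩
            have hlmem : ∀ y ∈ l, y ∈ S \ {z} := by
              intro y hy
              refine ⟨hlmemS y hy, fun h => ?_⟩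
              subst h
              exact hzw' (hlS y hy hzΛ)
            refine ⟨w, hwz, ?_⟩
            intro u hu
            rcases hu.1 with huΛ | huI
            · exact hΛdel w hw (fun h => hzw h.symm) u ⟨huΛ, hu.2⟩
            · exact walk_conn hwz hlmem hadjchain u
                (List.mem_cons_of_mem _ (hsplit ▸ List.mem_append_left _ huI)) w
                (List.mem_cons_self)
  have hSeq : S = Λ := hΛ.2 S hTwoConn hΛS
  obtain ⟨i0, t0, hIeq⟩ := List.exists_cons_of_ne_nil hIne
  have hi0 : i0 ∈ I := hIeq ▸ List.mem_cons_self
  exact hInotΛ i0 hi0 (hSeq ▸ (Or.inr hi0 : i0 ∈ S))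


open Classical in
noncomputable def gateF (A : V → V → Prop) (Λ : Set V) : V → V := fun x =>
  if h : ∃ w, w ∈ Λ ∧ PReach A Λ x w then h.choose else x

lemma preach_exists (hconn : ConnOn A Set.univ) (hne : Λ.Nonempty) (x : V) :
    ∃ w, w ∈ Λ ∧ PReach A Λ x w := by
  obtain ⟨w0, hw0⟩ := hne
  have hr : ReflTransGen (Stp A Set.univ) x w0 := hconn x trivial w0 trivial
  induction hr using Relation.ReflTransGen.head_induction_on with
  | refl => exact ⟨w0, hw0, .refl⟩
  | head hstep htail ih =>
    rename_i a c
    by_cases haΛ : a ∈ Λ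
    · exact ⟨a, haΛ, .refl⟩
    · obtain ⟨w, hwΛ, hwR⟩ := ih
      by_cases hcΛ : c ∈ Λ
      · exact ⟨c, hcΛ, .single ⟨hstep.1, fun h => haΛ h.1, fun h => h.2 rfl⟩⟩
      · exact ⟨w, hwΛ, .head ⟨hstep.1, fun h => haΛ h.1, fun h => hcΛ h.1⟩ hwR⟩

lemma gateF_spec (hconn : ConnOn A Set.univ) (hne : Λ.Nonempty) (x : V) :
    gateF A Λ x ∈ Λ ∧ PReach A Λ x (gateF A Λ x) := by
  rw [gateF]
  rw [dif_pos (preach_exists hconn hne x)]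
  exact (preach_exists hconn hne x).choose_spec

lemma gateF_eq (hΛ : IsLobe A Λ) (hconn : ConnOn A Set.univ) (hne : Λ.Nonempty)
    {x w : V} (hw : w ∈ Λ) (h : PReach A Λ x w) : gateF A Λ x = w := by
  obtain ⟨hg1, hg2⟩ := gateF_spec hconn hne x
  by_cases hx : x ∈ Λ
  · rw [← preach_eq_of_mem hx hg2, preach_eq_of_mem hx h]
  · exact gate_unique hΛ hg1 hw hx hg2 h

lemma gateF_id (hΛ : IsLobe A Λ) (hconn : ConnOn A Set.univ) (hne : Λ.Nonempty)
    {x : V} (hx : x ∈ Λ) : gateF A Λ x = x :=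
  gateF_eq hΛ hconn hne hx .refl

lemma gateF_lobe_const (hΛ : IsLobe A Λ) (hconn : ConnOn A Set.univ) (hne : Λ.Nonempty)
    {M : Set V} (hM : IsLobe A M) (hMΛ : M ≠ Λ) {x y : V} (hx : x ∈ M) (hy : y ∈ M) :
    gateF A Λ x = gateF A Λ y := by
  by_cases hint : ∃ c, c ∈ M ∩ Λ
  · obtain ⟨c, hc⟩ := hint
    have key : ∀ t ∈ M, gateF A Λ t = c := by
      intro t ht
      refine gateF_eq hΛ hconn hne hc.2 ?_
      refine ReflTransGen.mono ?_ _ _ (hM.1.2.1 t ht c hc.1)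
      intro a b hp
      have hmem : ∀ d, d ∈ M → d ∉ Λ \ {c} := by
        intro d hd hdΛ
        exact hdΛ.2 (lobe_inter_subsingleton hM hΛ hMΛ ⟨hd, hdΛ.1⟩ hc)
      exact ⟨hp.1, hmem a hp.2.1, hmem b hp.2.2⟩
    rw [key x hx, key y hy]
  · have hdisj : ∀ d, d ∈ M → d ∉ Λ := fun d hd hdΛ => hint ⟨d, hd, hdΛ⟩
    obtain ⟨hg1, hg2⟩ := gateF_spec hconn hne x
    refine (gateF_eq hΛ hconn hne hg1 ?_).symm
    refine ReflTransGen.trans ?_ hg2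
    refine ReflTransGen.mono ?_ _ _ ((@ReflTransGen.symmetric _ _ ⟨fun _ _ h => (stp_symm (S := M) h)⟩).symm _ _ (hM.1.2.1 x hx y hy))
    intro a b hp
    exact ⟨hp.1, fun h => hdisj a hp.2.1 h.1, fun h => hdisj b hp.2.2 h.1⟩

end Gate

section Trans
variable {G : Type*} [Group G] [MulAction G V] {A : V → V → Prop} {Λ : Set V}

lemma stab_smul_mem {g : G} (hg : g ∈ MulAction.stabilizer G Λ) {x : V} (hx : x ∈ Λ) :
    g • x ∈ Λ := by
  have h : g • Λ = Λ := MulAction.mem_stabilizer_iff.1 hg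
  rw [← h]
  exact Set.smul_mem_smul_set hx

lemma mem_stab_of_inv_smul {g : G} (h : g⁻¹ • Λ = Λ) : g⁻¹ ∈ MulAction.stabilizer G Λ :=
  MulAction.mem_stabilizer_iff.2 h

/-- main transitivity lemma -/
lemma stab_transitiveOn
    (hA : ∀ (g : G) (u v : V), A u v ↔ A (g • u) (g • v))
    (hvprim : PrimitiveOn (⊤ : Subgroup G) (Set.univ : Set V))
    (hconn : ConnOn A Set.univ)
    (hΛ : IsLobe A Λ)
    (hthree : ∃ a b c : V, a ∈ Λ ∧ b ∈ Λ ∧ c ∈ Λ ∧ a ≠ b ∧ a ≠ c ∧ b ≠ c) :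
    TransitiveOn (MulAction.stabilizer G Λ) Λ := by
  have hne : Λ.Nonempty := hΛ.1.1.nonempty
  set p : V → V := gateF A Λ with hp
  have hpid : ∀ {x : V}, x ∈ Λ → p x = x := fun {x} hx => gateF_id hΛ hconn hne hx
  have hpconst : ∀ {M : Set V}, IsLobe A M → M ≠ Λ → ∀ {x y : V}, x ∈ M → y ∈ M → p x = p y :=
    fun {M} hM hMΛ {x y} hx hy => gateF_lobe_const hΛ hconn hne hM hMΛ hx hy
  set ORel : V → V → Prop := fun x y => ∃ h ∈ MulAction.stabilizer G Λ, h • x = y with hORel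
  have hOrefl : ∀ x, ORel x x := fun x => ⟨1, one_mem _, one_smul _ _⟩
  have hOsymm : ∀ {x y}, ORel x y → ORel y x := by
    rintro x y ⟨h, hh, rfl⟩
    exact ⟨h⁻¹, inv_mem hh, inv_smul_smul h x⟩
  have hOtrans : ∀ {x y z}, ORel x y → ORel y z → ORel x z := by
    rintro x y z ⟨h, hh, rfl⟩ ⟨h', hh', rfl⟩
    exact ⟨h' * h, mul_mem hh' hh, by rw [mul_smul]⟩
  -- main claim : for all distinct u v in Λ, Λ ⊆ O_u ∪ O_v
  have main : ∀ u ∈ Λ, ∀ v ∈ Λ, u ≠ v → ∀ x ∈ Λ, ORel u x ∨ ORel v x := by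
    intro u hu v hv huv x hx
    set ρ : V → V → Prop := fun x y => ∃ g : G,
      (g • x = u ∧ g • y = v) ∨ (g • x = v ∧ g • y = u) with hρ
    set σ := EqvGen ρ with hσ
    have hσequiv : IsEquivRelOn (Set.univ : Set V) σ := by
      refine ⟨fun a _ => EqvGen.refl a, fun a _ b _ hab => EqvGen.symm _ _ hab,
        fun a _ b _ c _ h1 h2 => EqvGen.trans _ _ _ h1 h2⟩
    have hσinv : ∀ h ∈ (⊤ : Subgroup G), ∀ a ∈ (Set.univ : Set V), ∀ b ∈ (Set.univ : Set V),
        σ a b → σ (h • a) (h • b) := by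
      intro h _ a ha b hb hab
      clear ha hb
      induction hab with
      | rel a b hr =>
        obtain ⟨g, hg⟩ := hr
        refine EqvGen.rel _ _ ⟨g * h⁻¹, ?_⟩
        rcases hg with ⟨h1, h2⟩ | ⟨h1, h2⟩
        · exact Or.inl ⟨by rw [mul_smul, inv_smul_smul]; exact h1,
            by rw [mul_smul, inv_smul_smul]; exact h2⟩
        · exact Or.inr ⟨by rw [mul_smul, inv_smul_smul]; exact h1,
            by rw [mul_smul, inv_smul_smul]; exact h2⟩
      | refl a => exact EqvGen.refl _
      | symm a b _ ih => exact EqvGen.symm _ _ ih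
      | trans a b c _ _ ih1 ih2 => exact EqvGen.trans _ _ _ ih1 ih2
    rcases hvprim.2 σ hσequiv hσinv with htriv | huniv
    · exfalso
      exact huv (htriv u trivial v trivial (EqvGen.rel _ _ ⟨1, Or.inl ⟨one_smul _ _, one_smul _ _⟩⟩))
    · -- bound σ by the projected relation
      set T : Set V := {t | ORel u t ∨ ORel v t} with hT
      have hbound : ∀ a b, σ a b → (p a = p b ∨ (p a ∈ T ∧ p b ∈ T)) := by
        intro a b hab
        induction hab with
        | rel a b hr =>
          obtain ⟨g, hg⟩ := hr
          have haΛ : g • a ∈ Λ ∧ g • b ∈ Λ := by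
            rcases hg with ⟨h1, h2⟩ | ⟨h1, h2⟩
            · exact ⟨h1 ▸ hu, h2 ▸ hv⟩
            · exact ⟨h1 ▸ hv, h2 ▸ hu⟩
          have hmema : a ∈ g⁻¹ • Λ := by
            rw [Set.mem_inv_smul_set_iff]; exact haΛ.1
          have hmemb : b ∈ g⁻¹ • Λ := by
            rw [Set.mem_inv_smul_set_iff]; exact haΛ.2
          by_cases hLeq : g⁻¹ • Λ = Λ
          · right
            have hginv : g⁻¹ ∈ MulAction.stabilizer G Λ := MulAction.mem_stabilizer_iff.2 hLeq
            have haΛ' : a ∈ Λ := hLeq ▸ hmema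
            have hbΛ' : b ∈ Λ := hLeq ▸ hmemb
            rw [hpid haΛ', hpid hbΛ']
            constructor
            · rcases hg with ⟨h1, -⟩ | ⟨h1, -⟩
              · exact Or.inl ⟨g⁻¹, hginv, by rw [← h1, inv_smul_smul]⟩
              · exact Or.inr ⟨g⁻¹, hginv, by rw [← h1, inv_smul_smul]⟩
            · rcases hg with ⟨-, h2⟩ | ⟨-, h2⟩
              · exact Or.inr ⟨g⁻¹, hginv, by rw [← h2, inv_smul_smul]⟩
              · exact Or.inl ⟨g⁻¹, hginv, by rw [← h2, inv_smul_smul]⟩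
          · left
            exact hpconst (isLobe_smul hA g⁻¹ hΛ) hLeq hmema hmemb
        | refl a => exact Or.inl rfl
        | symm a b _ ih =>
          rcases ih with h | h
          · exact Or.inl h.symm
          · exact Or.inr ⟨h.2, h.1⟩
        | trans a b c _ _ ih1 ih2 =>
          rcases ih1 with h1 | h1
          · rcases ih2 with h2 | h2
            · exact Or.inl (h1.trans h2)
            · exact Or.inr ⟨h1 ▸ h2.1, h2.2⟩
          · rcases ih2 with h2 | h2
            · exact Or.inr ⟨h1.1, h2 ▸ h1.2⟩
            · exact Or.inr ⟨h1.1, h2.2⟩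
      have := hbound x u (huniv x trivial u trivial)
      rcases this with h | h
      · rw [hpid hx, hpid hu] at h
        exact Or.inl (hOsymm (h ▸ hOrefl x))
      · rw [hpid hx] at h
        rcases h.1 with h' | h'
        · exact Or.inl h'
        · exact Or.inr h'
  -- conclude transitivity using ≥ 3 vertices
  by_contra hnt
  rw [TransitiveOn] at hnt
  push_neg at hnt
  obtain ⟨u, hu, v, hv, hno⟩ := hnt
  have hOuv : ¬ ORel u v := by
    intro ⟨h, hh, hhv⟩; exact hno h hh hhv
  have huv : u ≠ v := fun h => hOuv (h ▸ hOrefl u)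
  have hcover : ∀ x ∈ Λ, ORel u x ∨ ORel v x := main u hu v hv huv
  -- if two distinct elements lie in the same orbit, contradiction
  have hsame : ∀ w w', (∀ x ∈ Λ, ORel w x ∨ ORel w' x) → ∀ y y', y ∈ Λ → y' ∈ Λ → y ≠ y' →
      ORel w y → ORel w y' → ¬ ORel w w' → w' ∈ Λ → False := by
    intro w w' _ y y' hy hy' hyy' hwy hwy' hww' hw'Λ
    rcases main y hy y' hy' hyy' w' hw'Λ with h | h
    · exact hww' (hOtrans hwy h)
    · exact hww' (hOtrans hwy' h)
  rcases hthree with ⟨a, b, c, ha, hb, hc, hab, hac, hbc⟩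
  have hmem3 : ∀ x ∈ Λ, ORel u x ∨ ORel v x := hcover
  have hOvu : ¬ ORel v u := fun h => hOuv (hOsymm h)
  rcases hmem3 a ha with hau | hav
  · rcases hmem3 b hb with hbu | hbv
    · exact hsame u v hcover a b ha hb hab hau hbu hOuv hv
    · rcases hmem3 c hc with hcu | hcv
      · exact hsame u v hcover a c ha hc hac hau hcu hOuv hv
      · exact hsame v u (fun x hx => (hmem3 x hx).symm) b c hb hc hbc hbv hcv hOvu hu
  · rcases hmem3 b hb with hbu | hbv
    · rcases hmem3 c hc with hcu | hcv
      · exact hsame u v hcover b c hb hc hbc hbu hcu hOuv hv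
      · exact hsame v u (fun x hx => (hmem3 x hx).symm) a c ha hc hac hav hcv hOvu hu
    · exact hsame v u (fun x hx => (hmem3 x hx).symm) a b ha hb hab hav hbv hOvu hu

/-- primitivity of the stabiliser on the lobe -/
lemma stab_primitiveOn
    (hA : ∀ (g : G) (u v : V), A u v ↔ A (g • u) (g • v))
    (hvprim : PrimitiveOn (⊤ : Subgroup G) (Set.univ : Set V))
    (hconn : ConnOn A Set.univ)
    (hΛ : IsLobe A Λ)
    (hthree : ∃ a b c : V, a ∈ Λ ∧ b ∈ Λ ∧ c ∈ Λ ∧ a ≠ b ∧ a ≠ c ∧ b ≠ c) :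
    PrimitiveOn (MulAction.stabilizer G Λ) Λ := by
  have hne : Λ.Nonempty := hΛ.1.1.nonempty
  set p : V → V := gateF A Λ with hp
  have hpid : ∀ {x : V}, x ∈ Λ → p x = x := fun {x} hx => gateF_id hΛ hconn hne hx
  have hpconst : ∀ {M : Set V}, IsLobe A M → M ≠ Λ → ∀ {x y : V}, x ∈ M → y ∈ M → p x = p y :=
    fun {M} hM hMΛ {x y} hx hy => gateF_lobe_const hΛ hconn hne hM hMΛ hx hy
  have hpmem : ∀ t : V, p t ∈ Λ := fun t => (gateF_spec hconn hne t).1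
  refine ⟨stab_transitiveOn hA hvprim hconn hΛ hthree, ?_⟩
  intro r hrequiv hrinv
  set s : V → V → Prop := fun x y => ∃ g : G, g • x ∈ Λ ∧ g • y ∈ Λ ∧ r (g • x) (g • y) with hs
  set σ := EqvGen s with hσ
  have hσequiv : IsEquivRelOn (Set.univ : Set V) σ :=
    ⟨fun a _ => EqvGen.refl a, fun a _ b _ hab => EqvGen.symm _ _ hab,
      fun a _ b _ c _ h1 h2 => EqvGen.trans _ _ _ h1 h2⟩
  have hσinv : ∀ h ∈ (⊤ : Subgroup G), ∀ a ∈ (Set.univ : Set V), ∀ b ∈ (Set.univ : Set V),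
      σ a b → σ (h • a) (h • b) := by
    intro h _ a ha b hb hab
    clear ha hb
    induction hab with
    | rel a b hr =>
      obtain ⟨g, h1, h2, h3⟩ := hr
      refine EqvGen.rel _ _ ⟨g * h⁻¹, ?_, ?_, ?_⟩ <;>
        simp only [mul_smul, inv_smul_smul] <;> assumption
    | refl a => exact EqvGen.refl _
    | symm a b _ ih => exact EqvGen.symm _ _ ih
    | trans a b c _ _ ih1 ih2 => exact EqvGen.trans _ _ _ ih1 ih2
  rcases hvprim.2 σ hσequiv hσinv with htriv | huniv
  · left
    intro a ha b hb hab
    exact htriv a trivial b trivial (EqvGen.rel _ _ ⟨1, by simpa using ha, by simpa using hb,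
      by simpa using hab⟩)
  · right
    have hbound : ∀ a b, σ a b → (r (p a) (p b) ∨ p a = p b) := by
      intro a b hab
      induction hab with
      | rel a b hr =>
        obtain ⟨g, h1, h2, h3⟩ := hr
        have hmema : a ∈ g⁻¹ • Λ := by rw [Set.mem_inv_smul_set_iff]; exact h1
        have hmemb : b ∈ g⁻¹ • Λ := by rw [Set.mem_inv_smul_set_iff]; exact h2
        by_cases hLeq : g⁻¹ • Λ = Λ
        · left
          have hginv : g⁻¹ ∈ MulAction.stabilizer G Λ := MulAction.mem_stabilizer_iff.2 hLeq
          have haΛ' : a ∈ Λ := hLeq ▸ hmema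
          have hbΛ' : b ∈ Λ := hLeq ▸ hmemb
          rw [hpid haΛ', hpid hbΛ']
          have := hrinv g⁻¹ hginv (g • a) h1 (g • b) h2 h3
          rwa [inv_smul_smul, inv_smul_smul] at this
        · right
          exact hpconst (isLobe_smul hA g⁻¹ hΛ) hLeq hmema hmemb
      | refl a => exact Or.inr rfl
      | symm a b _ ih =>
        rcases ih with h | h
        · exact Or.inl (hrequiv.2.1 _ (hpmem a) _ (hpmem b) h)
        · exact Or.inr h.symm
      | trans a b c _ _ ih1 ih2 =>
        rcases ih1 with h1 | h1
        · rcases ih2 with h2 | h2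
          · exact Or.inl (hrequiv.2.2 _ (hpmem a) _ (hpmem b) _ (hpmem c) h1 h2)
          · exact Or.inl (h2 ▸ h1)
        · rcases ih2 with h2 | h2
          · exact Or.inl (h1 ▸ h2)
          · exact Or.inr (h1.trans h2)
    intro a ha b hb
    rcases hbound a b (huniv a trivial b trivial) with h | h
    · rwa [hpid ha, hpid hb] at h
    · rw [hpid ha, hpid hb] at h
      exact h ▸ hrequiv.1 a ha
  
end Trans

section OrbComm
variable {G : Type*} [Group G] [MulAction G V] {A : V → V → Prop} {Λ : Set V}

lemma stab_smul_mem' {g : G} (hg : g ∈ MulAction.stabilizer G Λ) {x : V} (hx : x ∈ Λ) :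
    g • x ∈ Λ := by
  have h : g • Λ = Λ := MulAction.mem_stabilizer_iff.1 hg
  rw [← h]
  exact Set.smul_mem_smul_set hx

lemma all_lobes_in_orbit
    (hA : ∀ (g : G) (u v : V), A u v ↔ A (g • u) (g • v))
    (hvprim : PrimitiveOn (⊤ : Subgroup G) (Set.univ : Set V))
    (hconn : ConnOn A Set.univ)
    (hΛ : IsLobe A Λ) {M : Set V} (hM : IsLobe A M) : ∃ g : G, g • Λ = M := by
  by_contra hno
  push_neg at hno
  have hne : Λ.Nonempty := hΛ.1.1.nonempty
  set p : V → V := gateF A Λ with hp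
  have hpid : ∀ {x : V}, x ∈ Λ → p x = x := fun {x} hx => gateF_id hΛ hconn hne hx
  have hpconst : ∀ {M' : Set V}, IsLobe A M' → M' ≠ Λ → ∀ {x y : V}, x ∈ M' → y ∈ M' → p x = p y :=
    fun {M'} hM' hM'Λ {x y} hx hy => gateF_lobe_const hΛ hconn hne hM' hM'Λ hx hy
  set s : V → V → Prop := fun x y => ∃ M' : Set V, IsLobe A M' ∧ (∀ g : G, g • Λ ≠ M') ∧
    x ∈ M' ∧ y ∈ M' with hs
  set σ := EqvGen s with hσ
  have hσequiv : IsEquivRelOn (Set.univ : Set V) σ :=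
    ⟨fun a _ => EqvGen.refl a, fun a _ b _ hab => EqvGen.symm _ _ hab,
      fun a _ b _ c _ h1 h2 => EqvGen.trans _ _ _ h1 h2⟩
  have hσinv : ∀ h ∈ (⊤ : Subgroup G), ∀ a ∈ (Set.univ : Set V), ∀ b ∈ (Set.univ : Set V),
      σ a b → σ (h • a) (h • b) := by
    intro h _ a ha b hb hab
    clear ha hb
    induction hab with
    | rel a b hr =>
      obtain ⟨M', hM', hMno, haM, hbM⟩ := hr
      refine EqvGen.rel _ _ ⟨h • M', isLobe_smul hA h hM', ?_, Set.smul_mem_smul_set haM,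
        Set.smul_mem_smul_set hbM⟩
      intro g hg
      apply hMno (h⁻¹ * g)
      rw [mul_smul, hg, inv_smul_smul]
    | refl a => exact EqvGen.refl _
    | symm a b _ ih => exact EqvGen.symm _ _ ih
    | trans a b c _ _ ih1 ih2 => exact EqvGen.trans _ _ _ ih1 ih2
  have hbound : ∀ a b, σ a b → p a = p b := by
    intro a b hab
    induction hab with
    | rel a b hr =>
      obtain ⟨M', hM', hMno, haM, hbM⟩ := hr
      have hMΛ : M' ≠ Λ := by
        intro h
        exact hMno 1 (by rw [one_smul, h])
      exact hpconst hM' hMΛ haM hbM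
    | refl a => rfl
    | symm a b _ ih => exact ih.symm
    | trans a b c _ _ ih1 ih2 => exact ih1.trans ih2
  obtain ⟨x, hxM, y, hyM, hxy⟩ := hM.1.1
  obtain ⟨u, huΛ, v, hvΛ, huv⟩ := hΛ.1.1
  rcases hvprim.2 σ hσequiv hσinv with htriv | huniv
  · exact hxy (htriv x trivial y trivial (EqvGen.rel _ _ ⟨M, hM, hno, hxM, hyM⟩))
  · apply huv
    have := hbound u v (huniv u trivial v trivial)
    rwa [hpid huΛ, hpid hvΛ] at this

lemma stab_comm_of_regular
    (hΛ : IsLobe A Λ)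
    (htrans : TransitiveOn (MulAction.stabilizer G Λ) Λ)
    (hprim : PrimitiveOn (MulAction.stabilizer G Λ) Λ)
    (hreg : RegularOn (MulAction.stabilizer G Λ) Λ) :
    ∀ g ∈ MulAction.stabilizer G Λ, ∀ k ∈ MulAction.stabilizer G Λ, ∀ x ∈ Λ,
      g • k • x = k • g • x := by
  obtain ⟨o, ho⟩ := hΛ.1.1.nonempty
  set St := MulAction.stabilizer G Λ with hSt
  have hrig : ∀ g ∈ St, ∀ g' ∈ St, ∀ x ∈ Λ, g • x = g' • x → ∀ y ∈ Λ, g • y = g' • y := by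
    intro g hg g' hg' x hx hxy y hy
    have h1 : (g'⁻¹ * g) • x = x := by rw [mul_smul, hxy, inv_smul_smul]
    have h2 := hreg.2 (g'⁻¹ * g) (mul_mem (inv_mem hg') hg) x hx h1 y hy
    rw [mul_smul] at h2
    calc g • y = g' • g'⁻¹ • g • y := by rw [smul_inv_smul]
    _ = g' • y := by rw [h2]
  have hdich : ∀ g ∈ St, (∀ x ∈ Λ, g • x = x) ∨
      (∀ q ∈ St, ∃ n : ℤ, ∀ x ∈ Λ, q • x = (g ^ n) • x) := by
    intro g hg
    have hzmem : ∀ n : ℤ, g ^ n ∈ St := fun n => zpow_mem hg n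
    have hzΛ : ∀ n : ℤ, (g ^ n) • o ∈ Λ := fun n => stab_smul_mem' (hzmem n) ho
    set r : V → V → Prop := fun x y => ∃ a ∈ St, ∃ n m : ℤ,
      a • ((g ^ n) • o) = x ∧ a • ((g ^ m) • o) = y with hr
    have hrequiv : IsEquivRelOn Λ r := by
      refine ⟨?_, ?_, ?_⟩
      · intro x hx
        obtain ⟨a, ha, hax⟩ := htrans o ho x hx
        exact ⟨a, ha, 0, 0, by simpa using hax, by simpa using hax⟩
      · rintro x _ y _ ⟨a, ha, n, m, h1, h2⟩
        exact ⟨a, ha, m, n, h2, h1⟩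
      · rintro x hx y hy z hz ⟨a, ha, n, m, h1, h2⟩ ⟨b, hb, k, l, h3, h4⟩
        refine ⟨a, ha, n, m + l - k, h1, ?_⟩
        have hba : (b⁻¹ * a) • ((g ^ m) • o) = (g ^ k) • o := by
          rw [mul_smul, h2, ← h3, inv_smul_smul]
        have hba2 : (g ^ (k - m)) • ((g ^ m) • o) = (g ^ k) • o := by
          rw [smul_smul, ← zpow_add, sub_add_cancel]
        have hagree := hrig (b⁻¹ * a) (mul_mem (inv_mem hb) ha) (g ^ (k - m)) (hzmem _)
          ((g ^ m) • o) (hzΛ m) (hba.trans hba2.symm) ((g ^ (m + l - k)) • o) (hzΛ _)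
        have : (b⁻¹ * a) • ((g ^ (m + l - k)) • o) = (g ^ l) • o := by
          rw [hagree, smul_smul, ← zpow_add]
          congr 1
          ring_nf
        calc a • ((g ^ (m + l - k)) • o) = b • ((b⁻¹ * a) • ((g ^ (m + l - k)) • o)) := by
              rw [mul_smul, smul_inv_smul]
        _ = b • ((g ^ l) • o) := by rw [this]
        _ = z := h4
    have hrinv : ∀ h ∈ St, ∀ u ∈ Λ, ∀ v ∈ Λ, r u v → r (h • u) (h • v) := by
      rintro h hh u _ v _ ⟨a, ha, n, m, h1, h2⟩
      exact ⟨h * a, mul_mem hh ha, n, m, by rw [mul_smul, h1], by rw [mul_smul, h2]⟩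
    rcases hprim.2 r hrequiv hrinv with htriv | huniv
    · left
      have hgo : g • o = o := by
        refine htriv (g • o) (stab_smul_mem' hg ho) o ho ?_
        exact ⟨1, one_mem _, 1, 0, by simp, by simp⟩
      exact fun x hx => hreg.2 g hg o ho hgo x hx
    · right
      intro q hq
      obtain ⟨a, ha, n, m, h1, h2⟩ := huniv (q • o) (stab_smul_mem' hq ho) o ho
      have hd : (a * g ^ m) • o = o := by rw [mul_smul, h2]
      have hdtriv : ∀ x ∈ Λ, (a * g ^ m) • x = x :=
        fun x hx => hreg.2 (a * g ^ m) (mul_mem ha (hzmem m)) o ho hd x hx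
      have hqo : q • o = (g ^ (n - m)) • o := by
        have hsplit : (g ^ m) • ((g ^ (n - m)) • o) = (g ^ n) • o := by
          rw [smul_smul, ← zpow_add]
          congr 2
          ring
        calc q • o = a • (g ^ n) • o := h1.symm
        _ = a • ((g ^ m) • ((g ^ (n - m)) • o)) := by rw [hsplit]
        _ = (a * g ^ m) • ((g ^ (n - m)) • o) := by rw [mul_smul]
        _ = (g ^ (n - m)) • o := hdtriv _ (hzΛ _)
      refine ⟨n - m, fun x hx => ?_⟩
      exact hrig q hq (g ^ (n - m)) (hzmem _) o ho hqo x hx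
  intro g hg k hk x hx
  rcases hdich g hg with htriv | hpow
  · rw [htriv (k • x) (stab_smul_mem' hk hx), htriv x hx]
  · obtain ⟨n, hn⟩ := hpow k hk
    rw [hn x hx, hn (g • x) (stab_smul_mem' hg hx), smul_smul, smul_smul,
      ← zpow_one_add, ← zpow_add_one, add_comm]

end OrbComm

section NotReg
variable {G : Type*} [Group G] [MulAction G V] {A : V → V → Prop} {Λ : Set V}

lemma stab_not_regular
    (hA : ∀ (g : G) (u v : V), A u v ↔ A (g • u) (g • v))
    (hvtrans : ∀ u ∈ (Set.univ : Set V), ∀ v ∈ (Set.univ : Set V), ∃ h ∈ (⊤ : Subgroup G), h • u = v)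
    (hvprim : PrimitiveOn (⊤ : Subgroup G) (Set.univ : Set V))
    (hconn : ConnOn A Set.univ) (hcut0 : ∃ v : V, IsCutVertex A v)
    (hΛ : IsLobe A Λ)
    (htrans : TransitiveOn (MulAction.stabilizer G Λ) Λ)
    (hprim : PrimitiveOn (MulAction.stabilizer G Λ) Λ)
    (hreg : RegularOn (MulAction.stabilizer G Λ) Λ) : False := by
  classical
  set St := MulAction.stabilizer G Λ with hStdef
  have hcomm : ∀ g ∈ St, ∀ k ∈ St, ∀ x ∈ Λ, g • k • x = k • g • x :=
    stab_comm_of_regular hΛ htrans hprim hreg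
  have hrig : ∀ g ∈ St, ∀ g' ∈ St, ∀ x ∈ Λ, g • x = g' • x → ∀ y ∈ Λ, g • y = g' • y := by
    intro g hg g' hg' x hx hxy y hy
    have h1 : (g'⁻¹ * g) • x = x := by rw [mul_smul, hxy, inv_smul_smul]
    have h2 := hreg.2 (g'⁻¹ * g) (mul_mem (inv_mem hg') hg) x hx h1 y hy
    rw [mul_smul] at h2
    calc g • y = g' • g'⁻¹ • g • y := by rw [smul_inv_smul]
    _ = g' • y := by rw [h2]
  -- transporter function
  obtain ⟨tr, htr⟩ : ∃ tr : V → V → G, ∀ x ∈ Λ, ∀ y ∈ Λ, tr x y ∈ St ∧ tr x y • x = y := by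
    refine ⟨fun x y => if h : ∃ g, g ∈ St ∧ g • x = y then h.choose else (1 : G), ?_⟩
    intro x hx y hy
    obtain ⟨g, hgSt, hgxy⟩ := htrans x hx y hy
    have hex : ∃ g, g ∈ St ∧ g • x = y := ⟨g, hgSt, hgxy⟩
    dsimp only
    rw [dif_pos hex]
    exact hex.choose_spec
  -- step weights
  obtain ⟨ε, hεSt, hεpos, hεneg⟩ : ∃ ε : V → V → G, (∀ x y, ε x y ∈ St) ∧
      (∀ x y : V, (∃ g : G, g • x ∈ Λ ∧ g • y ∈ Λ) →
        ∃ c : G, c • x ∈ Λ ∧ c • y ∈ Λ ∧ ε x y = tr (c • x) (c • y)) ∧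
      (∀ x y : V, ¬ (∃ g : G, g • x ∈ Λ ∧ g • y ∈ Λ) → ε x y = 1) := by
    refine ⟨fun x y => if h : ∃ g : G, g • x ∈ Λ ∧ g • y ∈ Λ
      then tr (h.choose • x) (h.choose • y) else 1, ?_, ?_, ?_⟩
    · intro x y
      by_cases h : ∃ g : G, g • x ∈ Λ ∧ g • y ∈ Λ
      · dsimp only; rw [dif_pos h]; exact (htr _ h.choose_spec.1 _ h.choose_spec.2).1
      · dsimp only; rw [dif_neg h]; exact one_mem _
    · intro x y h
      dsimp only
      rw [dif_pos h]
      exact ⟨h.choose, h.choose_spec.1, h.choose_spec.2, rfl⟩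
    · intro x y h
      dsimp only
      rw [dif_neg h]
  set SOK : V → V → Prop := fun x y => ∃ g : G, g • x ∈ Λ ∧ g • y ∈ Λ with hSOKdef
  have hSOKsymm : ∀ {x y}, SOK x y → SOK y x := by
    rintro x y ⟨g, h1, h2⟩; exact ⟨g, h2, h1⟩
  have hSOKinv : ∀ {x y} (h : G), SOK x y → SOK (h • x) (h • y) := by
    rintro x y h ⟨g, h1, h2⟩
    refine ⟨g * h⁻¹, ?_, ?_⟩ <;> simp only [mul_smul, inv_smul_smul] <;> assumption
  -- congruence of group elements acting on Λ
  set Cong : G → G → Prop := fun g g' => g ∈ St ∧ g' ∈ St ∧ ∀ d ∈ Λ, g • d = g' • d with hCongdef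
  have hCrefl : ∀ {g}, g ∈ St → Cong g g := fun hg => ⟨hg, hg, fun d _ => rfl⟩
  have hCsymm : ∀ {g g'}, Cong g g' → Cong g' g :=
    fun h => ⟨h.2.1, h.1, fun d hd => (h.2.2 d hd).symm⟩
  have hCtrans : ∀ {g g' g''}, Cong g g' → Cong g' g'' → Cong g g'' :=
    fun h1 h2 => ⟨h1.1, h2.2.1, fun d hd => (h1.2.2 d hd).trans (h2.2.2 d hd)⟩
  have hCmul : ∀ {a a' b b'}, Cong a a' → Cong b b' → Cong (a * b) (a' * b') := by
    intro a a' b b' h1 h2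
    refine ⟨mul_mem h1.1 h2.1, mul_mem h1.2.1 h2.2.1, fun d hd => ?_⟩
    rw [mul_smul, mul_smul, h2.2.2 d hd, h1.2.2 _ (stab_smul_mem' h2.2.1 hd)]
  have hCinv : ∀ {a a'}, Cong a a' → Cong a⁻¹ a'⁻¹ := by
    intro a a' h
    refine ⟨inv_mem h.1, inv_mem h.2.1, fun d hd => ?_⟩
    have hmem : a⁻¹ • d ∈ Λ := stab_smul_mem' (inv_mem h.1) hd
    have := h.2.2 _ hmem
    calc a⁻¹ • d = a'⁻¹ • a' • a⁻¹ • d := by rw [inv_smul_smul]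
    _ = a'⁻¹ • a • a⁻¹ • d := by rw [← this]
    _ = a'⁻¹ • d := by rw [smul_inv_smul]
  have hCcomm : ∀ {a b : G}, a ∈ St → b ∈ St → Cong (a * b) (b * a) := by
    intro a b ha hb
    refine ⟨mul_mem ha hb, mul_mem hb ha, fun d hd => ?_⟩
    rw [mul_smul, mul_smul]
    exact hcomm a ha b hb d hd
  have hCof : ∀ {k : G}, k ∈ St → ∀ {a b : V}, a ∈ Λ → b ∈ Λ → k • a = b → Cong k (tr a b) := by
    intro k hk a b ha hb hab
    exact ⟨hk, (htr a ha b hb).1, fun d hd =>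
      hrig k hk (tr a b) (htr a ha b hb).1 a ha (hab.trans (htr a ha b hb).2.symm) d hd⟩
  have hCone : Cong 1 1 := hCrefl (one_mem _)
  -- triviality of tr a a
  have htraa : ∀ {a : V}, a ∈ Λ → ∀ d ∈ Λ, tr a a • d = d := by
    intro a ha d hd
    exact hreg.2 (tr a a) (htr a ha a ha).1 a ha (htr a ha a ha).2 d hd
  -- well-definedness of ε
  have hεwd : ∀ {x y : V} (g : G), g • x ∈ Λ → g • y ∈ Λ → Cong (ε x y) (tr (g • x) (g • y)) := by
    intro x y g hgx hgy
    obtain ⟨c, hcx, hcy, hceq⟩ := hεpos x y ⟨g, hgx, hgy⟩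
    rw [hceq]
    by_cases hxy : x = y
    · subst hxy
      refine ⟨(htr _ hcx _ hcx).1, (htr _ hgx _ hgx).1, fun d hd => ?_⟩
      rw [htraa hcx d hd, htraa hgx d hd]
    · -- x ≠ y : the two transported lobes coincide
      have hlobe : (c⁻¹ • Λ : Set V) = g⁻¹ • Λ := by
        by_contra hne
        apply hxy
        refine lobe_inter_subsingleton (isLobe_smul hA c⁻¹ hΛ) (isLobe_smul hA g⁻¹ hΛ) hne
          ⟨?_, ?_⟩ ⟨?_, ?_⟩ <;> rw [Set.mem_inv_smul_set_iff] <;> assumption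
      set k : G := g * c⁻¹ with hkdef
      have hkSt : k ∈ St := by
        rw [hStdef, MulAction.mem_stabilizer_iff]
        calc (g * c⁻¹) • Λ = g • (c⁻¹ • Λ) := by rw [mul_smul]
        _ = g • (g⁻¹ • Λ) := by rw [hlobe]
        _ = Λ := by rw [smul_inv_smul]
      have hk1 : k • (c • x) = g • x := by
        rw [hkdef, mul_smul, inv_smul_smul]
      have hk2 : k • (c • y) = g • y := by
        rw [hkdef, mul_smul, inv_smul_smul]
      set t1 : G := tr (c • x) (c • y) with ht1def
      have ht1St : t1 ∈ St := (htr _ hcx _ hcy).1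
      have hconj : (k * t1 * k⁻¹) • (g • x) = g • y := by
        have : k⁻¹ • (g • x) = c • x := by rw [← hk1, inv_smul_smul]
        rw [mul_smul, mul_smul, this, (htr _ hcx _ hcy).2, hk2]
      have hcong1 : Cong (k * t1 * k⁻¹) (tr (g • x) (g • y)) :=
        hCof (mul_mem (mul_mem hkSt ht1St) (inv_mem hkSt)) hgx hgy hconj
      refine hCtrans ?_ hcong1
      refine ⟨ht1St, mul_mem (mul_mem hkSt ht1St) (inv_mem hkSt), fun d hd => ?_⟩
      have hmem : k⁻¹ • d ∈ Λ := stab_smul_mem' (inv_mem hkSt) hd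
      calc t1 • d = t1 • (k • k⁻¹ • d) := by rw [smul_inv_smul]
      _ = k • (t1 • (k⁻¹ • d)) := (hcomm k hkSt t1 ht1St _ hmem).symm
      _ = (k * t1 * k⁻¹) • d := by simp [mul_smul]
  have hεinv : ∀ (x y : V) (h : G), Cong (ε (h • x) (h • y)) (ε x y) := by
    intro x y h
    by_cases hs : SOK x y
    · obtain ⟨g, h1, h2⟩ := hs
      have e1 : (g * h⁻¹) • (h • x) = g • x := by rw [mul_smul, inv_smul_smul]
      have e2 : (g * h⁻¹) • (h • y) = g • y := by rw [mul_smul, inv_smul_smul]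
      have w1 := hεwd (g * h⁻¹) (x := h • x) (y := h • y) (by rw [e1]; exact h1)
        (by rw [e2]; exact h2)
      rw [e1, e2] at w1
      exact hCtrans w1 (hCsymm (hεwd g h1 h2))
    · have hs2 : ¬ SOK (h • x) (h • y) := by
        intro hc
        obtain ⟨g, h1, h2⟩ := hc
        exact hs ⟨g * h, by rwa [mul_smul], by rwa [mul_smul]⟩
      rw [hεneg _ _ hs, hεneg _ _ hs2]
      exact hCone
  have hεrev : ∀ {x y : V}, SOK x y → Cong (ε y x) (ε x y)⁻¹ := by
    rintro x y ⟨g, h1, h2⟩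
    refine hCtrans (hεwd g h2 h1) (hCtrans ?_ (hCinv (hCsymm (hεwd g h1 h2))))
    refine hCsymm (hCof (inv_mem (htr _ h1 _ h2).1) h2 h1 ?_)
    rw [inv_smul_eq_iff]
    exact (htr _ h1 _ h2).2.symm
  have hεself : ∀ (x : V), Cong (ε x x) 1 := by
    intro x
    by_cases hs : SOK x x
    · obtain ⟨c, hcx, _, hceq⟩ := hεpos x x hs
      rw [hceq]
      exact ⟨(htr _ hcx _ hcx).1, one_mem _, fun d hd => by rw [htraa hcx d hd, one_smul]⟩
    · rw [hεneg _ _ hs]; exact hCone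
  -- total weight of a walk
  set tw : V → List V → G :=
    fun x m => (List.zip (x :: m) m).foldr (fun p acc => ε p.1 p.2 * acc) 1 with htwdef
  have htwnil : ∀ x : V, tw x [] = 1 := fun x => by simp [htwdef]
  have htwcons : ∀ (x y : V) (m : List V), tw x (y :: m) = ε x y * tw y m := by
    intro x y m
    simp only [htwdef, List.zip_cons_cons, List.foldr_cons]
  have htwSt : ∀ (m : List V) (x : V), tw x m ∈ St := by
    intro m
    induction m with
    | nil => intro x; rw [htwnil]; exact one_mem _
    | cons y m ih => intro x; rw [htwcons]; exact mul_mem (hεSt x y) (ih y)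
  have htwapp : ∀ (m1 m2 : List V) (x : V),
      tw x (m1 ++ m2) = tw x m1 * tw (EndV x m1) m2 := by
    intro m1
    induction m1 with
    | nil => intro m2 x; simp [htwnil]
    | cons y m1 ih =>
      intro m2 x
      rw [List.cons_append, htwcons, ih, htwcons, endV_cons, mul_assoc]
  have htwinv : ∀ (m : List V) (x : V) (h : G),
      Cong (tw (h • x) (m.map (fun z => h • z))) (tw x m) := by
    intro m
    induction m with
    | nil => intro x h; rw [List.map_nil, htwnil, htwnil]; exact hCone
    | cons y m ih =>
      intro x h
      rw [List.map_cons, htwcons, htwcons]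
      exact hCmul (hεinv x y h) (ih y h)
  have hendmap : ∀ (h : G) (m : List V) (x : V),
      EndV (h • x) (m.map (fun z => h • z)) = h • EndV x m := by
    intro h m
    induction m with
    | nil => intro x; rfl
    | cons y m ih => intro x; rw [List.map_cons, endV_cons, endV_cons, ih]
  have hchmap : ∀ {m : List V} {x : V} (h : G), List.Chain SOK x m →
      List.Chain SOK (h • x) (m.map (fun z => h • z)) := by
    intro m
    induction m with
    | nil => intro x h _; exact .nil
    | cons y m ih =>
      intro x h hc
      cases hc with
      | cons_cons hr hc0 => exact .cons (hSOKinv h hr) (ih h hc0)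
  -- reversal
  have hrev : ∀ (m : List V) (x : V), List.Chain SOK x m →
      ∃ mr, List.Chain SOK (EndV x m) mr ∧ EndV (EndV x m) mr = x ∧
        Cong (tw (EndV x m) mr) (tw x m)⁻¹ := by
    intro m
    induction m with
    | nil =>
      intro x _
      refine ⟨[], .nil, rfl, ?_⟩
      rw [htwnil, htwnil, inv_one]
      exact hCone
    | cons z m' ih =>
      intro x hc
      cases hc with
      | cons_cons hr hc0 =>
        obtain ⟨mr', hcr, her, hwr⟩ := ih z hc0
        rw [endV_cons]
        refine ⟨mr' ++ [x], chain_snoc hcr (by rw [her]; exact hSOKsymm hr), ?_, ?_⟩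
        · rw [endV_append, her]; rfl
        · rw [htwapp, her, htwcons, htwnil, mul_one, htwcons, mul_inv_rev]
          exact hCmul hwr (hεrev hr)
  -- ===== the loop lemma =====
  have hloop : ∀ (n : ℕ) (m : List V) (x : V), m.length ≤ n → List.Chain SOK x m →
      EndV x m = x → ∀ d ∈ Λ, tw x m • d = d := by
    intro n
    induction n with
    | zero =>
      intro m x hl _ _ d _
      have hm : m = [] := List.length_eq_zero_iff.1 (Nat.le_zero.1 hl)
      subst hm
      rw [htwnil, one_smul]
    | succ n ih =>
      intro m x hl hc hend d hd
      cases m with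
      | nil => rw [htwnil, one_smul]
      | cons y m' =>
        cases hc with
        | cons_cons hr1 hc1 =>
          rw [endV_cons] at hend
          by_cases hxy : x = y
          · -- stationary first step
            subst hxy
            rw [htwcons]
            have hlen : m'.length ≤ n := by
              simp only [List.length_cons] at hl; omega
            have hih := ih m' x hlen hc1 hend d hd
            rw [mul_smul, hih]
            exact ((hεself x).2.2 d hd).trans (one_smul _ _)
          · obtain ⟨g0, hg0x, hg0y⟩ := hr1
            by_cases hD : ∃ (s : List V) (a b : V) (t : List V), y :: m' = s ++ a :: b :: t ∧
                ∃ g : G, g • x ∈ Λ ∧ g • y ∈ Λ ∧ g • a ∈ Λ ∧ g • b ∈ Λ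
            · obtain ⟨s, a, b, t, hm, g, hgx2, hgy2, hga, hgb⟩ := hD
              cases s with
              | nil =>
                rw [List.nil_append] at hm
                obtain ⟨h1, h2⟩ := List.cons_eq_cons.mp hm
                subst h1
                subst h2
                cases hc1 with
                | cons_cons hr2 hc2 =>
                  have hch2 : List.Chain SOK x (b :: t) := .cons ⟨g, hgx2, hgb⟩ hc2
                  have hend2 : EndV x (b :: t) = x := by
                    rw [endV_cons]
                    rw [endV_cons] at hend
                    exact hend
                  have hlen2 : (b :: t).length ≤ n := by
                    simp only [List.length_cons] at hl ⊢; omega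
                  have hih := ih (b :: t) x hlen2 hch2 hend2 d hd
                  have w1 : Cong (ε x y) (tr (g • x) (g • y)) := hεwd g hgx2 hgy2
                  have w2 : Cong (ε y b) (tr (g • y) (g • b)) := hεwd g hgy2 hgb
                  have hval : (tr (g • y) (g • b) * tr (g • x) (g • y)) • (g • x) = g • b := by
                    rw [mul_smul, (htr _ hgx2 _ hgy2).2, (htr _ hgy2 _ hgb).2]
                  have hcomb : Cong (tr (g • x) (g • y) * tr (g • y) (g • b)) (ε x b) := by
                    refine hCtrans (hCcomm (htr _ hgx2 _ hgy2).1 (htr _ hgy2 _ hgb).1) ?_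
                    refine hCtrans (hCof (mul_mem (htr _ hgy2 _ hgb).1 (htr _ hgx2 _ hgy2).1)
                      hgx2 hgb hval) ?_
                    exact hCsymm (hεwd g hgx2 hgb)
                  have c2' : Cong (ε x y * ε y b) (ε x b) := hCtrans (hCmul w1 w2) hcomb
                  rw [htwcons, htwcons, ← mul_assoc]
                  have hfin : Cong (ε x y * ε y b * tw b t) (ε x b * tw b t) :=
                    hCmul c2' (hCrefl (htwSt t b))
                  rw [hfin.2.2 d hd, ← htwcons]
                  exact hih
              | cons y2 s2 =>
                obtain ⟨h1, h2⟩ := List.cons_eq_cons.mp hm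
                subst h1
                rw [List.append_eq] at h2
                have hsplit : s2 ++ a :: b :: t = (s2 ++ [a]) ++ (b :: t) := by simp
                rw [h2, hsplit] at hc1 hend
                obtain ⟨hcP, hcQ⟩ := chain_append' hc1
                have hEa : EndV y (s2 ++ [a]) = a := by
                  rw [endV_append]; rfl
                rw [hEa] at hcQ
                cases hcQ with
                | cons_cons hr2 hcQ2 =>
                  -- loop 1 : from y through s2 to a, closing back to y
                  have hchain1 : List.Chain SOK y ((s2 ++ [a]) ++ [y]) :=
                    chain_snoc hcP (by rw [hEa]; exact ⟨g, hga, hgy2⟩)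
                  have hend1 : EndV y ((s2 ++ [a]) ++ [y]) = y := by
                    rw [endV_append]; rfl
                  have hllen : m'.length = s2.length + 2 + t.length := by
                    rw [h2]; simp; omega
                  have hlen1 : ((s2 ++ [a]) ++ [y]).length ≤ n := by
                    simp [List.length_append] at hl ⊢
                    omega
                  have hih1 := ih _ y hlen1 hchain1 hend1
                  -- loop 2 : from x directly to b then t
                  have hch2 : List.Chain SOK x (b :: t) := .cons ⟨g, hgx2, hgb⟩ hcQ2
                  have hend2 : EndV x (b :: t) = x := by
                    rw [endV_append, hEa, endV_cons] at hend
                    rw [endV_cons]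
                    exact hend
                  have hlen2 : (b :: t).length ≤ n := by
                    simp only [List.length_cons] at hl ⊢
                    rw [hllen] at hl
                    omega
                  have hih2 := ih _ x hlen2 hch2 hend2 d hd
                  -- weight bookkeeping
                  have hP1 : Cong (tw y ((s2 ++ [a]) ++ [y])) 1 :=
                    ⟨htwSt _ _, one_mem _, fun d' hd' => by rw [one_smul]; exact hih1 d' hd'⟩
                  have e : tw y (s2 ++ [a]) * ε a y = tw y ((s2 ++ [a]) ++ [y]) := by
                    conv_rhs => rw [htwapp]
                    rw [hEa, htwcons, htwnil, mul_one]
                  have hPe : Cong (tw y (s2 ++ [a]) * ε a y) 1 := by rw [e]; exact hP1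
                  have hgrp : tw y (s2 ++ [a]) = (tw y (s2 ++ [a]) * ε a y) * (ε a y)⁻¹ := by
                    group
                  have hPcong : Cong (tw y (s2 ++ [a])) (ε a y)⁻¹ := by
                    rw [hgrp]
                    refine hCtrans (hCmul hPe (hCrefl (inv_mem (hεSt a y)))) ?_
                    rw [one_mul]
                    exact hCrefl (inv_mem (hεSt a y))
                  -- congruence of the contracted first step
                  have w1 : Cong (ε x y) (tr (g • x) (g • y)) := hεwd g hgx2 hgy2
                  have w2 : Cong (ε a y) (tr (g • a) (g • y)) := hεwd g hga hgy2
                  have w3 : Cong (ε a b) (tr (g • a) (g • b)) := hεwd g hga hgb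
                  have ht1St := (htr _ hgx2 _ hgy2).1
                  have ht2St := (htr _ hga _ hgy2).1
                  have ht3St := (htr _ hga _ hgb).1
                  have ht2inv : (tr (g • a) (g • y))⁻¹ • (g • y) = g • a := by
                    rw [inv_smul_eq_iff]
                    exact (htr _ hga _ hgy2).2.symm
                  have hval : ((tr (g • a) (g • b) * (tr (g • a) (g • y))⁻¹) *
                      tr (g • x) (g • y)) • (g • x) = g • b := by
                    rw [mul_smul, mul_smul, (htr _ hgx2 _ hgy2).2, ht2inv,
                      (htr _ hga _ hgb).2]
                  have c2 : Cong (ε x y * ((ε a y)⁻¹ * ε a b)) (ε x b) := by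
                    refine hCtrans (hCmul w1 (hCmul (hCinv w2) w3)) ?_
                    refine hCtrans (hCcomm ht1St (mul_mem (inv_mem ht2St) ht3St)) ?_
                    refine hCtrans (hCmul (hCcomm (inv_mem ht2St) ht3St) (hCrefl ht1St)) ?_
                    refine hCtrans (hCof (mul_mem (mul_mem ht3St (inv_mem ht2St)) ht1St)
                      hgx2 hgb hval) ?_
                    exact hCsymm (hεwd g hgx2 hgb)
                  -- final assembly
                  rw [htwcons, h2, hsplit, htwapp, hEa, htwcons]
                  have hstep1 : Cong (ε x y * (tw y (s2 ++ [a]) * (ε a b * tw b t)))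
                      (ε x y * ((ε a y)⁻¹ * (ε a b * tw b t))) :=
                    hCmul (hCrefl (hεSt x y))
                      (hCmul hPcong (hCrefl (mul_mem (hεSt a b) (htwSt t b))))
                  have hre : ε x y * ((ε a y)⁻¹ * (ε a b * tw b t)) =
                      (ε x y * ((ε a y)⁻¹ * ε a b)) * tw b t := by group
                  have hstep3 : Cong ((ε x y * ((ε a y)⁻¹ * ε a b)) * tw b t)
                      (ε x b * tw b t) := hCmul c2 (hCrefl (htwSt t b))
                  have htotal : Cong (ε x y * (tw y (s2 ++ [a]) * (ε a b * tw b t)))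
                      (ε x b * tw b t) := by
                    refine hCtrans hstep1 ?_
                    rw [hre]
                    exact hstep3
                  rw [htotal.2.2 d hd, ← htwcons]
                  exact hih2
            · -- no step shares the lobe of the first step : gate argument
              exfalso
              have hL0 : IsLobe A (g0⁻¹ • Λ) := isLobe_smul hA g0⁻¹ hΛ
              have hL0ne : (g0⁻¹ • Λ).Nonempty := hL0.1.1.nonempty
              have hxL0 : x ∈ g0⁻¹ • Λ := by rw [Set.mem_inv_smul_set_iff]; exact hg0x
              have hyL0 : y ∈ g0⁻¹ • Λ := by rw [Set.mem_inv_smul_set_iff]; exact hg0y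
              have hPC : ∀ (m2 : List V) (z : V), List.Chain SOK z m2 →
                  (∀ (s : List V) (a b : V) (t : List V), z :: m2 = s ++ a :: b :: t →
                    ¬ ∃ g : G, g • x ∈ Λ ∧ g • y ∈ Λ ∧ g • a ∈ Λ ∧ g • b ∈ Λ) →
                  gateF A (g0⁻¹ • Λ) z = gateF A (g0⁻¹ • Λ) (EndV z m2) := by
                intro m2
                induction m2 with
                | nil => intro z _ _; rfl
                | cons z2 m2 ih2 =>
                  intro z hcz hcond
                  cases hcz with
                  | cons_cons hrz hcz2 =>
                    rw [endV_cons]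
                    have hstep : gateF A (g0⁻¹ • Λ) z = gateF A (g0⁻¹ • Λ) z2 := by
                      by_cases hzz : z = z2
                      · rw [hzz]
                      · obtain ⟨g1, hg1z, hg1z2⟩ := hrz
                        have hL1 : IsLobe A (g1⁻¹ • Λ) := isLobe_smul hA g1⁻¹ hΛ
                        have hzm : z ∈ g1⁻¹ • Λ := by
                          rw [Set.mem_inv_smul_set_iff]; exact hg1z
                        have hz2m : z2 ∈ g1⁻¹ • Λ := by
                          rw [Set.mem_inv_smul_set_iff]; exact hg1z2
                        have hneq : g1⁻¹ • Λ ≠ g0⁻¹ • Λ := by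
                          intro heq
                          refine hcond [] z z2 m2 rfl ⟨g0, hg0x, hg0y, ?_, ?_⟩
                          · have hz0 : z ∈ g0⁻¹ • Λ := heq ▸ hzm
                            rwa [Set.mem_inv_smul_set_iff] at hz0
                          · have hz0 : z2 ∈ g0⁻¹ • Λ := heq ▸ hz2m
                            rwa [Set.mem_inv_smul_set_iff] at hz0
                        exact gateF_lobe_const hL0 hconn hL0ne hL1 hneq hzm hz2m
                    rw [hstep]
                    refine ih2 z2 hcz2 ?_
                    intro s a b t heq hex
                    refine hcond (z :: s) a b t ?_ hex
                    rw [List.cons_append, ← heq]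
              have hgate := hPC m' y hc1 (fun s a b t heq hex => hD ⟨s, a, b, t, heq, hex⟩)
              rw [hend] at hgate
              rw [gateF_id hL0 hconn hL0ne hyL0, gateF_id hL0 hconn hL0ne hxL0] at hgate
              exact hxy hgate.symm
  -- ===== the special pair and the invariant relation =====
  obtain ⟨u, hu, v, hv, huv⟩ := hΛ.1.1
  obtain ⟨v0, hv0cut⟩ := hcut0
  have hvcut : IsCutVertex A v := every_vertex_cut hA hvtrans hv0cut v
  obtain ⟨L1, L2, hL1, hL2, hvL1, hvL2, hL12⟩ := two_lobes_of_cut hconn hvcut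
  obtain ⟨L', hL', hvL', hL'Λ⟩ : ∃ L', IsLobe A L' ∧ v ∈ L' ∧ L' ≠ Λ := by
    by_cases h : L1 = Λ
    · exact ⟨L2, hL2, hvL2, fun hh => hL12 (h.trans hh.symm)⟩
    · exact ⟨L1, hL1, hvL1, h⟩
  obtain ⟨g0', hg0'⟩ := all_lobes_in_orbit hA hvprim hconn hΛ hL'
  set τ : G := tr u v with hτdef
  have hτSt : τ ∈ St := (htr u hu v hv).1
  have hτuv : τ • u = v := (htr u hu v hv).2
  have hvb : g0'⁻¹ • v ∈ Λ := by
    rw [← hg0'] at hvL'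
    exact Set.mem_smul_set_iff_inv_smul_mem.1 hvL'
  set w' : V := g0' • (τ⁻¹ • (g0'⁻¹ • v)) with hw'def
  have hτvb : τ⁻¹ • (g0'⁻¹ • v) ∈ Λ := stab_smul_mem' (inv_mem hτSt) hvb
  have hw'L' : w' ∈ L' := by
    rw [← hg0', hw'def]
    exact Set.smul_mem_smul_set hτvb
  have hw'back : g0'⁻¹ • w' = τ⁻¹ • (g0'⁻¹ • v) := by rw [hw'def, inv_smul_smul]
  have huw' : u ≠ w' := by
    intro h
    apply huv
    exact lobe_inter_subsingleton hΛ hL' (fun hh => hL'Λ hh.symm) ⟨hu, h ▸ hw'L'⟩ ⟨hv, hvL'⟩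
  set R : V → V → Prop := fun a b => ∃ m : List V, List.Chain SOK a m ∧ EndV a m = b ∧
    ∀ d ∈ Λ, tw a m • d = d with hRdef
  have hRequiv : IsEquivRelOn (Set.univ : Set V) R := by
    refine ⟨?_, ?_, ?_⟩
    · intro a _
      exact ⟨[], .nil, rfl, fun d _ => by rw [htwnil, one_smul]⟩
    · rintro a _ b _ ⟨m, hcm, hendm, hwm⟩
      obtain ⟨mr, hcr, her, hwr⟩ := hrev m a hcm
      rw [hendm] at hcr her hwr
      refine ⟨mr, hcr, her, fun d hd => ?_⟩
      rw [hwr.2.2 d hd]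
      calc (tw a m)⁻¹ • d = (tw a m)⁻¹ • (tw a m • d) := by rw [hwm d hd]
      _ = d := inv_smul_smul _ _
    · rintro a _ b _ c _ ⟨m1, hc1', he1, hw1⟩ ⟨m2, hc2', he2, hw2⟩
      refine ⟨m1 ++ m2, chain_concat hc1' (by rw [he1]; exact hc2'), ?_, ?_⟩
      · rw [endV_append, he1, he2]
      · intro d hd
        rw [htwapp, he1, mul_smul, hw2 d hd, hw1 d hd]
  have hRinv : ∀ h ∈ (⊤ : Subgroup G), ∀ a ∈ (Set.univ : Set V), ∀ b ∈ (Set.univ : Set V),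
      R a b → R (h • a) (h • b) := by
    rintro h _ a _ b _ ⟨m, hcm, hendm, hwm⟩
    refine ⟨m.map (fun z => h • z), hchmap h hcm, by rw [hendmap, hendm], fun d hd => ?_⟩
    rw [(htwinv m a h).2.2 d hd]
    exact hwm d hd
  rcases hvprim.2 R hRequiv hRinv with htriv | huniv
  · -- R u w' with u ≠ w'
    apply huw'
    refine htriv u trivial w' trivial ?_
    have hsok2 : SOK v w' := ⟨g0'⁻¹, hvb, by rw [hw'back]; exact hτvb⟩
    refine ⟨[v, w'],
      .cons ⟨1, by simpa using hu, by simpa using hv⟩ (.cons hsok2 .nil), rfl, ?_⟩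
    intro d hd
    have e1 : Cong (ε u v) τ := by
      have hcong := hεwd (1 : G) (x := u) (y := v) (by simpa using hu) (by simpa using hv)
      simp only [one_smul] at hcong
      rw [hτdef]
      exact hcong
    have e2 : Cong (ε v w') τ⁻¹ := by
      have h2 := hεwd g0'⁻¹ (x := v) (y := w') hvb (by rw [hw'back]; exact hτvb)
      rw [hw'back] at h2
      exact hCtrans h2 (hCsymm (hCof (inv_mem hτSt) hvb hτvb rfl))
    have e3 : tw u [v, w'] = ε u v * (ε v w' * 1) := by rw [htwcons, htwcons, htwnil]
    rw [e3]
    have hcong2 : Cong (ε u v * (ε v w' * 1)) (τ * (τ⁻¹ * 1)) := hCmul e1 (hCmul e2 hCone)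
    rw [hcong2.2.2 d hd, mul_one, mul_smul, smul_inv_smul]
  · -- ¬ R u v
    obtain ⟨m, hcm, hendm, hwm⟩ := huniv u trivial v trivial
    have hc0 : List.Chain SOK u [v] := .cons ⟨1, by simpa using hu, by simpa using hv⟩ .nil
    obtain ⟨mr, hcr, her, hwr⟩ := hrev [v] u hc0
    have hEv : EndV u [v] = v := rfl
    rw [hEv] at hcr her hwr
    have hcl : List.Chain SOK u (m ++ mr) := chain_concat hcm (by rw [hendm]; exact hcr)
    have hendl : EndV u (m ++ mr) = u := by rw [endV_append, hendm, her]
    have hl := hloop (m ++ mr).length (m ++ mr) u le_rfl hcl hendl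
    have htw1 : Cong (tw u [v]) τ := by
      have e1 : tw u [v] = ε u v * 1 := by rw [htwcons, htwnil]
      rw [e1]
      refine hCtrans (hCmul (hεwd (1 : G) (x := u) (y := v) (by simpa using hu)
        (by simpa using hv)) hCone) ?_
      simp only [one_smul, mul_one]
      rw [hτdef]
      exact hCrefl (htr u hu v hv).1
    have hτv : τ⁻¹ • v ∈ Λ := stab_smul_mem' (inv_mem hτSt) hv
    have step := hl v hv
    rw [htwapp, hendm, mul_smul] at step
    have hmrv : tw v mr • v = τ⁻¹ • v := by
      rw [hwr.2.2 v hv, (hCinv htw1).2.2 v hv]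
    rw [hmrv, hwm _ hτv] at step
    have hτvv : τ • v = v := by
      calc τ • v = τ • (τ⁻¹ • v) := by rw [step]
      _ = v := smul_inv_smul τ v
    have htall := hreg.2 τ hτSt v hv hτvv u hu
    rw [hτuv] at htall
    exact huv htall.symm

end NotReg


end LobeAux

/-- Let `G` be a vertex-transitive, vertex-primitive group of
automorphisms of a connectivity-one digraph `Γ` (arc relation `A`) whose lobes all
have at least three vertices, and let `Λ` be a lobe of `Γ`. Then the setwise
stabiliser of `Λ` acts primitively and not regularly on the vertices of `Λ`. -/
theorem lobe_stabiliser_primitive_not_regular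
    {V : Type*} {G : Type*} [Group G] [MulAction G V]
    (A : V → V → Prop)
    (hA : ∀ (g : G) (u v : V), A u v ↔ A (g • u) (g • v))
    (hvtrans : TransitiveOn (⊤ : Subgroup G) (Set.univ : Set V))
    (hvprim : PrimitiveOn (⊤ : Subgroup G) (Set.univ : Set V))
    (hconn1 : ConnectivityOne A)
    (hthree : ∀ Λ' : Set V, IsLobe A Λ' →
      ∃ a b c : V, a ∈ Λ' ∧ b ∈ Λ' ∧ c ∈ Λ' ∧ a ≠ b ∧ a ≠ c ∧ b ≠ c)
    (Λ : Set V) (hΛ : IsLobe A Λ) :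
    PrimitiveOn (MulAction.stabilizer G Λ) Λ ∧ ¬ RegularOn (MulAction.stabilizer G Λ) Λ := by
  have hconn := hconn1.1
  have hprim := LobeAux.stab_primitiveOn hA hvprim hconn hΛ (hthree Λ hΛ)
  refine ⟨hprim, ?_⟩
  intro hreg
  exact LobeAux.stab_not_regular hA hvtrans hvprim hconn hconn1.2 hΛ hprim.1 hprim hreg
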